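/- arXiv:math/0212079 — 5 statements merged into one kernel-verified Lean document; each statement's English description precedes it below -/
import Mathlib

section
/- Let f, g : (0,1) → (0,1) be functions such that f is a strictly monotone increasing bijection (hence continuous), and suppose f(x/(x+(1-x)y)) = f(x)/(f(x)+(1-f(x))·g(y)) for all x, y ∈ (0,1). Then there exist positive real numbers a, b, c such that f(x) = x^c/(x^c + a(1-x)^c) and g(y) = b·y^c for all x, y ∈ (0,1). -/
open Set

lemma linear_of_additive_mono (L : ℝ → ℝ) (hadd : ∀ s t, L (s + t) = L s + L t)
    (hmono : Monotone L) : ∀ t, L t = L 1 * t := by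
  have h0 : L 0 = 0 := by have := hadd 0 0; simp at this; linarith
  set L' : ℝ →+ ℝ := ⟨⟨L, h0⟩, fun a b => hadd a b⟩ with hL'
  have hq : ∀ q : ℚ, L (q : ℝ) = L 1 * q := by
    intro q
    have := map_ratCast_smul L' ℝ ℝ q 1
    simp [smul_eq_mul] at this
    simp only [hL', AddMonoidHom.coe_mk, ZeroHom.coe_mk] at this
    rw [this, mul_comm]
  intro t
  by_contra hne
  rcases lt_or_gt_of_ne hne with h | h
  · have hc : 0 ≤ L 1 := by
      have h01 : L 0 ≤ L 1 := hmono (by norm_num)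
      simpa [h0] using h01
    rcases eq_or_lt_of_le hc with hc0 | hc0
    · rcases exists_rat_gt t with ⟨q, hqt⟩
      have : L t ≤ L q := hmono hqt.le
      rw [hq q, ← hc0] at this
      rcases exists_rat_lt t with ⟨p, hpt⟩
      have h2 : L p ≤ L t := hmono hpt.le
      rw [hq p, ← hc0] at h2
      simp at this h2
      rw [← hc0] at h
      nlinarith
    · obtain ⟨q, hq1, hq2⟩ := exists_rat_btwn (show L t / L 1 < t by
        rwa [div_lt_iff₀ hc0, mul_comm])
      have : L q ≤ L t := hmono hq2.le
      rw [hq q] at this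
      rw [div_lt_iff₀ hc0] at hq1
      nlinarith
  · have hc : 0 ≤ L 1 := by
      have h01 : L 0 ≤ L 1 := hmono (by norm_num)
      simpa [h0] using h01
    rcases eq_or_lt_of_le hc with hc0 | hc0
    · rcases exists_rat_gt t with ⟨q, hqt⟩
      have : L t ≤ L q := hmono hqt.le
      rw [hq q, ← hc0] at this
      rw [← hc0] at h
      nlinarith
    · obtain ⟨q, hq1, hq2⟩ := exists_rat_btwn (show t < L t / L 1 by
        rwa [lt_div_iff₀ hc0, mul_comm])
      have : L t ≤ L q := hmono hq1.le
      rw [hq q] at this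
      rw [lt_div_iff₀ hc0] at hq2
      nlinarith

theorem functional_equation_solution (f g : ℝ → ℝ)
    (hf_maps : Set.BijOn f (Set.Ioo (0:ℝ) 1) (Set.Ioo (0:ℝ) 1))
    (hf_mono : StrictMonoOn f (Set.Ioo (0:ℝ) 1))
    (hg_maps : Set.MapsTo g (Set.Ioo (0:ℝ) 1) (Set.Ioo (0:ℝ) 1))
    (hfe : ∀ x ∈ Set.Ioo (0:ℝ) 1, ∀ y ∈ Set.Ioo (0:ℝ) 1,
      f (x / (x + (1 - x) * y)) = f x / (f x + (1 - f x) * g y)) :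
    ∃ a b c : ℝ, 0 < a ∧ 0 < b ∧ 0 < c ∧
      (∀ x ∈ Set.Ioo (0:ℝ) 1, f x = x ^ c / (x ^ c + a * (1 - x) ^ c)) ∧
      (∀ y ∈ Set.Ioo (0:ℝ) 1, g y = b * y ^ c) := by
  have hx_mem : ∀ u : ℝ, 0 < u → (1 / (1 + u)) ∈ Ioo (0:ℝ) 1 := by
    intro u hu
    constructor
    · positivity
    · rw [div_lt_one (by linarith)]; linarith
  set Φ : ℝ → ℝ := fun u => (1 - f (1 / (1 + u))) / f (1 / (1 + u)) with hΦ
  have hfmem : ∀ u : ℝ, 0 < u → f (1 / (1 + u)) ∈ Ioo (0:ℝ) 1 :=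
    fun u hu => hf_maps.mapsTo (hx_mem u hu)
  have Φpos : ∀ u : ℝ, 0 < u → 0 < Φ u := by
    intro u hu
    obtain ⟨h1, h2⟩ := hfmem u hu
    exact div_pos (by linarith) h1
  -- key multiplicative relation
  have Φmul : ∀ u : ℝ, 0 < u → ∀ y ∈ Ioo (0:ℝ) 1, Φ (u * y) = Φ u * g y := by
    intro u hu y hy
    obtain ⟨hy0, hy1⟩ := hy
    set x := 1 / (1 + u) with hxdef
    have hx : x ∈ Ioo (0:ℝ) 1 := hx_mem u hu
    obtain ⟨hx0, hx1⟩ := hx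
    have hfx := hfmem u hu
    rw [← hxdef] at hfx
    obtain ⟨hfx0, hfx1⟩ := hfx
    have hgy := hg_maps ⟨hy0, hy1⟩
    obtain ⟨hgy0, hgy1⟩ := hgy
    have harg : x / (x + (1 - x) * y) = 1 / (1 + u * y) := by
      rw [hxdef]
      have h1 : (0:ℝ) < 1 + u := by linarith
      have h2 : (0:ℝ) < 1 + u * y := by positivity
      field_simp
      have h3 : (1:ℝ) + (1 + u - 1) * y = 1 + u * y := by ring
      rw [h3, div_self (ne_of_gt h2)]
    have heq := hfe x ⟨hx0, hx1⟩ y ⟨hy0, hy1⟩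
    rw [harg] at heq
    have hden : 0 < f x + (1 - f x) * g y := by
      have h3 : 0 < (1 - f x) * g y := mul_pos (by linarith) hgy0
      linarith
    rw [hΦ]
    simp only []
    rw [heq, ← hxdef]
    field_simp
    ring
  have Φmono : ∀ u v : ℝ, 0 < u → u < v → Φ u < Φ v := by
    intro u v hu huv
    have hv : 0 < v := lt_trans hu huv
    have hxu := hx_mem u hu
    have hxv := hx_mem v hv
    have hlt : 1 / (1 + v) < 1 / (1 + u) := by
      apply div_lt_div_of_pos_left one_pos (by linarith) (by linarith)
    have hf_lt : f (1 / (1 + v)) < f (1 / (1 + u)) := hf_mono hxv hxu hlt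
    obtain ⟨ha0, ha1⟩ := hfmem u hu
    obtain ⟨hb0, hb1⟩ := hfmem v hv
    rw [hΦ]
    simp only []
    rw [div_lt_div_iff₀ ha0 hb0]
    nlinarith
  set M : ℝ → ℝ := fun u => Φ u / Φ 1 with hM
  have hΦ1 : 0 < Φ 1 := Φpos 1 one_pos
  have Mpos : ∀ u : ℝ, 0 < u → 0 < M u := fun u hu => div_pos (Φpos u hu) hΦ1
  have gM : ∀ y ∈ Ioo (0:ℝ) 1, g y = M y := by
    intro y hy
    have := Φmul 1 one_pos y hy
    rw [one_mul] at this
    rw [hM]; simp only []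
    rw [eq_div_iff (ne_of_gt hΦ1), this]
    ring
  have Mmul : ∀ u v : ℝ, 0 < u → 0 < v → M (u * v) = M u * M v := by
    intro u v hu hv
    set w := 1 / (2 * (v + 1)) with hwdef
    have hw0 : 0 < w := by positivity
    have hw1 : w < 1 := by
      rw [hwdef, div_lt_one (by linarith)]; linarith
    have hvw0 : 0 < v * w := by positivity
    have hvw1 : v * w < 1 := by
      rw [hwdef, mul_one_div, div_lt_one (by linarith)]; linarith
    have hgw0 : 0 < g w := (hg_maps ⟨hw0, hw1⟩).1
    have h1 : Φ (u * v * w) = Φ (u * v) * g w := Φmul (u * v) (by positivity) w ⟨hw0, hw1⟩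
    have h2 : Φ (u * (v * w)) = Φ u * g (v * w) := Φmul u hu (v * w) ⟨hvw0, hvw1⟩
    have h3 : Φ (v * w) = Φ v * g w := Φmul v hv w ⟨hw0, hw1⟩
    have h4 : Φ (v * w) = Φ 1 * g (v * w) := by
      have := Φmul 1 one_pos (v * w) ⟨hvw0, hvw1⟩
      rwa [one_mul] at this
    have h5 : g (v * w) = Φ v * g w / Φ 1 := by
      rw [eq_div_iff (ne_of_gt hΦ1), ← h3, h4]
      ring
    have h6 : Φ (u * v) * g w = Φ u * (Φ v * g w / Φ 1) := by
      rw [← h1, ← h5, ← h2]; ring_nf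
    rw [hM]; simp only []
    field_simp
    field_simp at h6
    nlinarith [h6]
  set c : ℝ := Real.log (M (Real.exp 1)) with hc
  set L : ℝ → ℝ := fun t => Real.log (M (Real.exp t)) with hL
  have Ladd : ∀ s t, L (s + t) = L s + L t := by
    intro s t
    rw [hL]; simp only []
    rw [Real.exp_add, Mmul _ _ (Real.exp_pos s) (Real.exp_pos t),
      Real.log_mul (ne_of_gt (Mpos _ (Real.exp_pos s))) (ne_of_gt (Mpos _ (Real.exp_pos t)))]
  have Lmono : StrictMono L := by
    intro s t hst
    rw [hL]; simp only []
    apply Real.log_lt_log (Mpos _ (Real.exp_pos s))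
    rw [hM]; simp only []
    apply div_lt_div_of_pos_right _ hΦ1
    exact Φmono _ _ (Real.exp_pos s) (Real.exp_lt_exp.mpr hst)
  have Llin := linear_of_additive_mono L Ladd Lmono.monotone
  have hL1c : L 1 = c := by
    rw [hL, hc]
  have hcpos : 0 < c := by
    rw [← hL1c]
    have h0 : L 0 = 0 := by
      rw [hL]; simp only []
      rw [Real.exp_zero]
      have : M 1 = 1 := by rw [hM]; simp only []; exact div_self (ne_of_gt hΦ1)
      rw [this, Real.log_one]
    rw [← h0]
    exact Lmono zero_lt_one
  -- M u = u ^ c for u > 0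
  have Mrpow : ∀ u : ℝ, 0 < u → M u = u ^ c := by
    intro u hu
    have h1 : L (Real.log u) = Real.log (M u) := by
      rw [hL]; simp only []
      rw [Real.exp_log hu]
    have h2 := Llin (Real.log u)
    rw [h1, hL1c] at h2
    rw [Real.rpow_def_of_pos hu]
    rw [← Real.exp_log (Mpos u hu), h2]
    ring_nf
  refine ⟨Φ 1, 1, c, hΦ1, one_pos, hcpos, ?_, ?_⟩
  · intro x hx
    obtain ⟨hx0, hx1⟩ := hx
    set u := (1 - x) / x with hu
    have hupos : 0 < u := div_pos (by linarith) hx0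
    have hxu : 1 / (1 + u) = x := by
      rw [hu]; field_simp; ring
    have hΦu : Φ u = (1 - f x) / f x := by
      rw [hΦ]; simp only []
      rw [hxu]
    have hΦM : Φ u = Φ 1 * M u := by
      rw [hM]; simp only []
      field_simp
    have huc : u ^ c = (1 - x) ^ c / x ^ c := by
      rw [hu, Real.div_rpow (by linarith) (le_of_lt hx0)]
    have hkey : (1 - f x) / f x = Φ 1 * ((1 - x) ^ c / x ^ c) := by
      rw [← huc, ← Mrpow u hupos, ← hΦM, hΦu]
    obtain ⟨hfx0, hfx1⟩ := hf_maps.mapsTo ⟨hx0, hx1⟩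
    have hxc : 0 < x ^ c := Real.rpow_pos_of_pos hx0 c
    have h1xc : 0 < (1 - x) ^ c := Real.rpow_pos_of_pos (by linarith) c
    have hden : 0 < x ^ c + Φ 1 * (1 - x) ^ c := by positivity
    rw [eq_div_iff (ne_of_gt hden)]
    have hfxne := ne_of_gt hfx0
    have hxcne := ne_of_gt hxc
    field_simp at hkey
    nlinarith [hkey]
  · intro y hy
    rw [one_mul, gM y hy, Mrpow y hy.1]
end

section
/- Let F : ℝ → ℝ, G : ℝ → ℝ, H : (-∞,0) → ℝ be continuous functions satisfying the Pexider equation F(u+v) = G(u) + H(v) for all u ∈ ℝ and v < 0. Then there exist real constants a, b, c such that F(w) = cw + a + b for all w ∈ ℝ, G(u) = cu + a for all u ∈ ℝ, and H(v) = cv + b for all v < 0. -/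
theorem pexider_equation (F G H : ℝ → ℝ)
    (hF : Continuous F) (hG : Continuous G) (hH : ContinuousOn H (Set.Iio (0:ℝ)))
    (h : ∀ u : ℝ, ∀ v < (0:ℝ), F (u + v) = G u + H v) :
    ∃ a b c : ℝ, (∀ w : ℝ, F w = c * w + a + b) ∧ (∀ u : ℝ, G u = c * u + a) ∧
      (∀ v < (0:ℝ), H v = c * v + b) := by
  set ψ : ℝ → ℝ := fun w => F (w - 1) - F (-1) with hψdef
  have hbase : ∀ a b : ℝ, b < 1 → ψ (a + b) = ψ a + ψ b := by
    intro a b hb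
    have h1 := h a (b - 1) (by linarith)
    have h2 := h 0 (b - 1) (by linarith)
    have h3 := h a (-1) (by norm_num)
    have h4 := h 0 (-1) (by norm_num)
    simp only [hψdef]
    have e1 : a + (b - 1) = a + b - 1 := by ring
    have e2 : (0:ℝ) + (b - 1) = b - 1 := by ring
    have e3 : a + (-1:ℝ) = a - 1 := by ring
    have e4 : (0:ℝ) + (-1) = (-1:ℝ) := by ring
    rw [e1] at h1; rw [e2] at h2; rw [e3] at h3; rw [e4] at h4
    linarith
  have hstep : ∀ x t s : ℝ, s < 1 → ψ (x + t) - ψ t = ψ (x + t - s) - ψ (t - s) := by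
    intro x t s hs
    have h1 := hbase (x + t - s) s hs
    have h2 := hbase (t - s) s hs
    have e1 : x + t - s + s = x + t := by ring
    have e2 : t - s + s = t := by ring
    rw [e1] at h1; rw [e2] at h2
    linarith
  have hψ0 : ψ 0 = 0 := by simp [hψdef]
  have hadd : ∀ x y : ℝ, ψ (x + y) = ψ x + ψ y := by
    intro x y
    set T : ℝ := max y 0 + 1 with hT
    have h1 := hstep x y (y - T) (by simp [hT]; linarith [le_max_left y 0])
    have h2 := hstep x 0 (0 - T) (by simp [hT]; linarith [le_max_right y 0])
    have e1 : x + y - (y - T) = x + T := by ring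
    have e2 : y - (y - T) = T := by ring
    have e3 : x + 0 - (0 - T) = x + T := by ring
    have e4 : (0:ℝ) - (0 - T) = T := by ring
    rw [e1, e2] at h1; rw [e3, e4] at h2
    simp only [add_zero, hψ0, sub_zero] at h2
    linarith
  have hψcont : Continuous ψ := by
    apply Continuous.sub (hF.comp (by continuity)) continuous_const
  set f : ℝ →+ ℝ := AddMonoidHom.mk' ψ (fun a b => hadd a b) with hf
  have hlin : ∀ x : ℝ, ψ x = ψ 1 * x := by
    intro x
    have := (f.toRealLinearMap hψcont).map_smul x 1
    simp only [AddMonoidHom.coe_toRealLinearMap, smul_eq_mul, mul_one] at this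
    have hfψ : ∀ z, f z = ψ z := fun z => rfl
    change ψ x = x * ψ 1 at this
    rw [this]; ring
  set c : ℝ := ψ 1 with hc
  have hFw : ∀ w : ℝ, F w = c * w + (F 0 - F (-1)) + F (-1) := by
    intro w
    have := hlin (w + 1)
    simp only [hψdef] at this hc
    have e : w + 1 - 1 = w := by ring
    rw [e] at this
    have hcval : c = F 0 - F (-1) := by
      show ψ 1 = F 0 - F (-1)
      simp [hψdef]
    nlinarith [this, hcval]
  refine ⟨G 0, F 0 - G 0, c, ?_, ?_, ?_⟩
  · intro w
    have h4 := h 0 (-1) (by norm_num)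
    have hH1 := h 0 (-1) (by norm_num)
    have := hFw w
    -- need F 0 - F (-1) + F (-1) = G 0 + (F 0 - G 0)
    linarith
  · intro u
    have h3 := h u (-1) (by norm_num)
    have h4 := h 0 (-1) (by norm_num)
    have h1 := hFw (u + -1)
    have h2 := hFw (0 + -1)
    rw [h3] at h1; rw [h4] at h2
    linarith
  · intro v hv
    have h2 := h 0 v hv
    have h1 := hFw (0 + v)
    rw [h2] at h1
    linarith
end

section
/- Let H be a complex Hilbert space and A, B ∈ E(H). Then A·B = 0 if and only if the range projection of A and the range projection of B are mutually orthogonal (their product is zero). -/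
/-- The range projection of a bounded operator: the orthogonal projection onto the
closure of its range, viewed as an operator on `H`. -/
noncomputable def rangeProjection {H : Type*} [NormedAddCommGroup H]
    [InnerProductSpace ℂ H] [CompleteSpace H] (A : H →L[ℂ] H) : H →L[ℂ] H :=
  ((LinearMap.range (A : H →ₗ[ℂ] H)).topologicalClosure).subtypeL ∘L
    Submodule.orthogonalProjection (LinearMap.range (A : H →ₗ[ℂ] H)).topologicalClosure

theorem zero_product_iff_orthogonal_range_projections
    {H : Type*} [NormedAddCommGroup H] [InnerProductSpace ℂ H] [CompleteSpace H]
    (A B : H →L[ℂ] H) (hA : 0 ≤ A ∧ A ≤ 1) (hB : 0 ≤ B ∧ B ≤ 1) :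
    A * B = 0 ↔ rangeProjection A * rangeProjection B = 0 := by
  have hAsa : IsSelfAdjoint A :=
    ((ContinuousLinearMap.nonneg_iff_isPositive A).mp hA.1).isSelfAdjoint
  set K := (LinearMap.range (A : H →ₗ[ℂ] H)).topologicalClosure with hK
  set L := (LinearMap.range (B : H →ₗ[ℂ] H)).topologicalClosure with hL
  -- key: A x = 0 ↔ x ∈ (range A)ᗮ
  have key : ∀ x : H, A x = 0 ↔ x ∈ (LinearMap.range (A : H →ₗ[ℂ] H))ᗮ := by
    intro x
    constructor
    · intro hx u hu
      obtain ⟨y, rfl⟩ := hu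
      have h1 : (inner ℂ (A y) x : ℂ) = inner ℂ y (A x) := by
        simpa only [hAsa.adjoint_eq] using ContinuousLinearMap.adjoint_inner_left A x y
      rw [ContinuousLinearMap.coe_coe, h1, hx, inner_zero_right]
    · intro hx
      have : ∀ y : H, (inner ℂ y (A x) : ℂ) = 0 := by
        intro y
        have := hx (A y) ⟨y, rfl⟩
        rwa [← hAsa.adjoint_eq, ContinuousLinearMap.adjoint_inner_left] at this
      simpa using this (A x)
  have hKorth : Kᗮ = (LinearMap.range (A : H →ₗ[ℂ] H))ᗮ := by
    rw [hK, ← Submodule.orthogonal_orthogonal_eq_closure,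
      Submodule.triorthogonal_eq_orthogonal]
  constructor
  · intro h
    -- range B ⊆ Kᗮ
    have hsub : L ≤ Kᗮ := by
      rw [hL]
      apply Submodule.topologicalClosure_minimal
      · rintro _ ⟨x, rfl⟩
        rw [hKorth, ← key]
        have := congrArg (fun T : H →L[ℂ] H => T x) h
        simpa using this
      · exact Submodule.isClosed_orthogonal _
    ext x
    have hmem : (((Submodule.orthogonalProjection (LinearMap.range (B : H →ₗ[ℂ] H)).topologicalClosure) x : H)) ∈
        ((LinearMap.range (A : H →ₗ[ℂ] H)).topologicalClosure)ᗮ := hsub (Submodule.coe_mem _)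
    simp only [ContinuousLinearMap.mul_apply, rangeProjection,
      ContinuousLinearMap.comp_apply, ContinuousLinearMap.zero_apply,
      Submodule.subtypeL_apply]
    rw [Submodule.orthogonalProjectionOnto_apply_of_mem_orthogonal hmem]
    simp
  · intro h
    ext x
    have hBx : B x ∈ L := Submodule.le_topologicalClosure _ ⟨x, rfl⟩
    have hP := congrArg (fun T : H →L[ℂ] H => T (B x)) h
    simp only [ContinuousLinearMap.mul_apply, rangeProjection,
      ContinuousLinearMap.comp_apply, ContinuousLinearMap.zero_apply,
      Submodule.subtypeL_apply] at hP
    rw [show ((Submodule.orthogonalProjection L (B x)) : H) = B x from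
    Submodule.starProjection_eq_self_iff.mpr hBx] at hP
    have hmem : B x ∈ Kᗮ :=
      Submodule.orthogonalProjectionOnto_eq_zero_iff.mp (Subtype.coe_injective (by simpa using hP))
    rw [hKorth] at hmem
    simp only [ContinuousLinearMap.mul_apply, ContinuousLinearMap.zero_apply]
    exact (key (B x)).mpr hmem
end

section
/- Let H be a complex Hilbert space with dim H ≥ 2 and let φ : E(H) → E(H) be a bijection preserving the order in both directions (A ≤ B ⟺ φ(A) ≤ φ(B)). Then φ maps the set of orthogonal projections in E(H) bijectively onto itself, and preserves the rank of finite-rank projections. -/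
set_option synthInstance.maxHeartbeats 400000
set_option maxHeartbeats 1000000
set_option linter.unusedSectionVars false

open ContinuousLinearMap
open scoped InnerProductSpace ComplexConjugate

namespace OBP

variable {H : Type*} [NormedAddCommGroup H] [InnerProductSpace ℂ H] [CompleteSpace H]

local notation "⟪" x ", " y "⟫" => @inner ℂ _ _ x y

lemma nonneg_isSelfAdjoint {A : H →L[ℂ] H} (h : 0 ≤ A) : IsSelfAdjoint A :=
  ((nonneg_iff_isPositive A).mp h).isSelfAdjoint

lemma re_inner_nonneg {A : H →L[ℂ] H} (h : 0 ≤ A) (x : H) : 0 ≤ RCLike.re ⟪A x, x⟫ :=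
  ((nonneg_iff_isPositive A).mp h).2 x

lemma le_iff_re_inner {A B : H →L[ℂ] H} (hA : IsSelfAdjoint A) (hB : IsSelfAdjoint B) :
    A ≤ B ↔ ∀ x, RCLike.re ⟪A x, x⟫ ≤ RCLike.re ⟪B x, x⟫ := by
  rw [le_def]
  constructor
  · intro h x
    have := h.2 x
    simp only [reApplyInnerSelf, sub_apply, inner_sub_left, map_sub] at this
    linarith
  · intro h
    refine ⟨ContinuousLinearMap.isSelfAdjoint_iff_isSymmetric.mp (hB.sub hA), fun x => ?_⟩
    simp only [reApplyInnerSelf, sub_apply, inner_sub_left, map_sub]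
    linarith [h x]

lemma pos_apply_eq_zero {T : H →L[ℂ] H} (hT : 0 ≤ T) {x : H}
    (hx : RCLike.re ⟪T x, x⟫ ≤ 0) : T x = 0 := by
  set S := CFC.sqrt T with hS
  have hS0 : 0 ≤ S := CFC.sqrt_nonneg _
  have hSS : S * S = T := CFC.sqrt_mul_sqrt_self T hT
  have hSsa : IsSelfAdjoint S := nonneg_isSelfAdjoint hS0
  have h1 : ⟪T x, x⟫ = ⟪S x, S x⟫ := by
    rw [← hSS, mul_apply_eq_comp]; nth_rewrite 1 [← hSsa.adjoint_eq]
    exact ContinuousLinearMap.adjoint_inner_left S x (S x)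
  have h2 : RCLike.re ⟪S x, S x⟫ = ‖S x‖ ^ 2 := by
    rw [inner_self_eq_norm_sq]
  have : ‖S x‖ ^ 2 ≤ 0 := by rw [← h2, ← h1]; exact hx
  have hSx : S x = 0 := by
    have := norm_nonneg (S x)
    have : ‖S x‖ = 0 := by nlinarith
    exact norm_eq_zero.mp this
  rw [← hSS, mul_apply_eq_comp, hSx, map_zero]



noncomputable def PV (V : Submodule ℂ H) [CompleteSpace V] : H →L[ℂ] H :=
  V.subtypeL ∘L V.orthogonalProjectionOnto

lemma PV_apply (V : Submodule ℂ H) [CompleteSpace V] (x : H) :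
    PV V x = (V.orthogonalProjectionOnto x : H) := rfl

lemma PV_mem (V : Submodule ℂ H) [CompleteSpace V] (x : H) : PV V x ∈ V :=
  (V.orthogonalProjectionOnto x).2

lemma PV_eq_self (V : Submodule ℂ H) [CompleteSpace V] {x : H} (hx : x ∈ V) : PV V x = x := by
  rw [PV_apply]
  exact congrArg _ (Submodule.orthogonalProjectionOnto_mem_subspace_eq_self (⟨x, hx⟩ : V))

lemma PV_sa (V : Submodule ℂ H) [CompleteSpace V] : IsSelfAdjoint (PV V) :=
  isSelfAdjoint_starProjection V

lemma PV_idem (V : Submodule ℂ H) [CompleteSpace V] : PV V * PV V = PV V := by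
  ext x
  simp only [mul_apply_eq_comp]
  rw [PV_eq_self V (PV_mem V x)]

lemma inner_PV_self (V : Submodule ℂ H) [CompleteSpace V] (x : H) :
    ⟪PV V x, x⟫ = (‖PV V x‖ : ℂ) ^ 2 := by
  have horth : x - PV V x ∈ Vᗮ := Submodule.sub_starProjection_mem_orthogonal (K := V) x
  have h0 : ⟪PV V x, x - PV V x⟫ = 0 :=
    Submodule.inner_right_of_mem_orthogonal (PV_mem V x) horth
  have hx' : PV V x + (x - PV V x) = x := by abel
  have hexp := inner_add_right (𝕜 := ℂ) (PV V x) (PV V x) (x - PV V x)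
  rw [hx', h0, add_zero, inner_self_eq_norm_sq_to_K] at hexp
  rw [hexp]
  norm_num

lemma re_inner_PV_self (V : Submodule ℂ H) [CompleteSpace V] (x : H) :
    RCLike.re ⟪PV V x, x⟫ = ‖PV V x‖ ^ 2 := by
  rw [inner_PV_self]
  norm_cast

lemma PV_nonneg (V : Submodule ℂ H) [CompleteSpace V] : 0 ≤ PV V := by
  rw [nonneg_iff_isPositive]
  refine ⟨ContinuousLinearMap.isSelfAdjoint_iff_isSymmetric.mp (PV_sa V), fun x => ?_⟩
  change 0 ≤ RCLike.re ⟪PV V x, x⟫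
  rw [re_inner_PV_self]
  positivity

lemma PV_le_one (V : Submodule ℂ H) [CompleteSpace V] : PV V ≤ 1 := by
  rw [le_iff_re_inner (PV_sa V) ((IsSelfAdjoint.one (H →L[ℂ] H)))]
  intro x
  rw [re_inner_PV_self]
  have h1 : RCLike.re ⟪(1 : H →L[ℂ] H) x, x⟫ = ‖x‖ ^ 2 := by
    rw [one_apply_eq_self]; exact inner_self_eq_norm_sq x
  rw [h1]
  have : ‖PV V x‖ ≤ ‖x‖ := by
    rw [PV_apply]
    have := Submodule.orthogonalProjectionOnto_norm_le V
    calc ‖(V.orthogonalProjectionOnto x : H)‖ = ‖V.orthogonalProjectionOnto x‖ := rfl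
      _ ≤ ‖V.orthogonalProjectionOnto‖ * ‖x‖ := (V.orthogonalProjectionOnto).le_opNorm x
      _ ≤ 1 * ‖x‖ := by gcongr
      _ = ‖x‖ := one_mul _
  nlinarith [norm_nonneg (PV V x), norm_nonneg x]

lemma PV_range (V : Submodule ℂ H) [CompleteSpace V] : LinearMap.range (PV V : H →ₗ[ℂ] H) = V := by
  apply le_antisymm
  · rintro y ⟨x, rfl⟩
    exact PV_mem V x
  · intro y hy
    exact ⟨y, PV_eq_self V hy⟩


noncomputable def Pp (p : H) : H →L[ℂ] H := PV (ℂ ∙ p)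

lemma Pp_apply {p : H} (hp : ‖p‖ = 1) (x : H) : Pp p x = ⟪p, x⟫ • p := by
  exact Submodule.starProjection_unit_singleton (𝕜 := ℂ) hp x

lemma Pp_self {p : H} (hp : ‖p‖ = 1) : Pp p p = p := by
  rw [Pp_apply hp, inner_self_eq_norm_sq_to_K, hp]
  norm_num

lemma re_inner_Pp {p : H} (hp : ‖p‖ = 1) (x : H) :
    RCLike.re ⟪Pp p x, x⟫ = ‖⟪p, x⟫‖ ^ 2 := by
  rw [Pp_apply hp, inner_smul_left, RCLike.conj_mul]
  norm_cast

lemma Pp_nonneg (p : H) : 0 ≤ Pp p := PV_nonneg _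
lemma Pp_le_one (p : H) : Pp p ≤ 1 := PV_le_one _
lemma Pp_sa (p : H) : IsSelfAdjoint (Pp p) := PV_sa _

lemma re_inner_one (x : H) : RCLike.re ⟪(1 : H →L[ℂ] H) x, x⟫ = ‖x‖ ^ 2 := by
  rw [one_apply_eq_self]; exact inner_self_eq_norm_sq x

lemma fix_of_Pp_le {C : H →L[ℂ] H} (hC1 : C ≤ 1) {p : H} (hp : ‖p‖ = 1)
    (h : Pp p ≤ C) : C p = p := by
  have hC0 : 0 ≤ C := le_trans (Pp_nonneg p) h
  have hge : (1 : ℝ) ≤ RCLike.re ⟪C p, p⟫ := by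
    have := (le_iff_re_inner (Pp_sa p) (nonneg_isSelfAdjoint hC0)).mp h p
    rw [re_inner_Pp hp, inner_self_eq_norm_sq_to_K, hp] at this
    simpa using this
  have h1C : 0 ≤ 1 - C := (nonneg_iff_isPositive _).mpr ((le_def C 1).mp hC1)
  have hre : RCLike.re ⟪(1 - C) p, p⟫ ≤ 0 := by
    simp only [sub_apply, one_apply_eq_self, inner_sub_left, map_sub]
    have : RCLike.re ⟪p, p⟫ = 1 := by
      rw [inner_self_eq_norm_sq]; rw [hp]; norm_num
    linarith
  have := pos_apply_eq_zero h1C hre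
  simp only [ContinuousLinearMap.coe_coe, sub_apply, one_apply_eq_self, sub_eq_zero] at this
  exact this.symm

lemma fix_closure {C : H →L[ℂ] H} {S : Set H} (hfix : ∀ p ∈ S, C p = p) :
    ∀ v ∈ (Submodule.span ℂ S).topologicalClosure, C v = v := by
  have hker : Submodule.span ℂ S ≤ LinearMap.ker ((C - 1 : H →L[ℂ] H) : H →ₗ[ℂ] H) := by
    rw [Submodule.span_le]
    intro x hx
    simp only [SetLike.mem_coe, LinearMap.mem_ker, ContinuousLinearMap.coe_coe, sub_apply, one_apply_eq_self, sub_eq_zero]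
    exact hfix x hx
  have hclosed : IsClosed ((LinearMap.ker ((C - 1 : H →L[ℂ] H) : H →ₗ[ℂ] H) : Submodule ℂ H) : Set H) :=
    ContinuousLinearMap.isClosed_ker (C - 1)
  have h2 := Submodule.topologicalClosure_minimal _ hker hclosed
  intro v hv
  have := h2 hv
  simp only [LinearMap.mem_ker, ContinuousLinearMap.coe_coe, sub_apply, one_apply_eq_self, sub_eq_zero] at this
  exact this

lemma PV_le_of_fix {C : H →L[ℂ] H} (hC0 : 0 ≤ C) (V : Submodule ℂ H) [CompleteSpace V]
    (hfix : ∀ v ∈ V, C v = v) : PV V ≤ C := by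
  have hCsa := nonneg_isSelfAdjoint hC0
  rw [le_iff_re_inner (PV_sa V) hCsa]
  intro x
  rw [re_inner_PV_self]
  set q := PV V x with hqdef
  set y := x - q with hydef
  have hq : C q = q := hfix q (PV_mem V x)
  have hyV : y ∈ Vᗮ := Submodule.sub_starProjection_mem_orthogonal (K := V) x
  have hx : x = q + y := by rw [hydef]; abel
  have hqy : ⟪q, y⟫ = 0 := Submodule.inner_right_of_mem_orthogonal (PV_mem V x) hyV
  have hyq : ⟪y, q⟫ = 0 := by
    rw [← inner_conj_symm, hqy, map_zero]
  have hCyq : ⟪C y, q⟫ = 0 := by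
    have : ⟪C y, q⟫ = ⟪y, C q⟫ := by
      nth_rewrite 1 [← hCsa.adjoint_eq]
      exact ContinuousLinearMap.adjoint_inner_left C q y
    rw [this, hq, hyq]
  have hexp : ⟪C x, x⟫ = ⟪q, q⟫ + (⟪C y, y⟫ : ℂ) := by
    calc ⟪C x, x⟫ = ⟪C q + C y, q + y⟫ := by rw [hx, map_add]
    _ = ⟪C q, q⟫ + ⟪C q, y⟫ + (⟪C y, q⟫ + ⟪C y, y⟫) := by
        rw [inner_add_left, inner_add_right, inner_add_right]
    _ = ⟪q, q⟫ + (⟪C y, y⟫ : ℂ) := by rw [hq, hqy, hCyq]; ring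
  rw [hexp, map_add]
  have h1 : RCLike.re ⟪q, q⟫ = ‖q‖ ^ 2 := by rw [inner_self_eq_norm_sq]
  have h2 : 0 ≤ RCLike.re ⟪C y, y⟫ := re_inner_nonneg hC0 y
  rw [h1]
  linarith

lemma Pp_le_PV {p : H} (hp : ‖p‖ = 1) (V : Submodule ℂ H) [CompleteSpace V]
    (hpV : p ∈ V) : Pp p ≤ PV V := by
  rw [le_iff_re_inner (Pp_sa p) (PV_sa V)]
  intro x
  rw [re_inner_PV_self, re_inner_Pp hp]
  have hyV : x - PV V x ∈ Vᗮ := Submodule.sub_starProjection_mem_orthogonal (K := V) x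
  have key : ⟪p, x⟫ = ⟪p, PV V x⟫ := by
    have h0 : ⟪p, x - PV V x⟫ = 0 :=
      Submodule.inner_right_of_mem_orthogonal hpV hyV
    have := inner_sub_right (𝕜 := ℂ) p x (PV V x)
    rw [h0] at this
    linear_combination -this
  rw [key]
  have := norm_inner_le_norm (𝕜 := ℂ) p (PV V x)
  rw [hp, one_mul] at this
  nlinarith [norm_nonneg (⟪p, PV V x⟫ : ℂ), norm_nonneg (PV V x)]


lemma sa_inner_symm {A : H →L[ℂ] H} (hA : IsSelfAdjoint A) (x y : H) :
    ⟪A x, y⟫ = ⟪x, A y⟫ := by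
  nth_rewrite 1 [← hA.adjoint_eq]
  exact ContinuousLinearMap.adjoint_inner_left A y x

lemma span_unit_coeff {p : H} (hp : ‖p‖ = 1) {v : H} (hv : v ∈ (ℂ ∙ p)) :
    v = ⟪p, v⟫ • p := by
  obtain ⟨a, ha⟩ := Submodule.mem_span_singleton.mp hv
  have : ⟪p, v⟫ = a := by
    rw [← ha, inner_smul_right, inner_self_eq_norm_sq_to_K, hp]
    norm_num
  rw [this, ha]

lemma real_coeff {A : H →L[ℂ] H} (hA : IsSelfAdjoint A) (p : H) :
    (⟪p, A p⟫ : ℂ) = (RCLike.re ⟪p, A p⟫ : ℝ) := by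
  have h1 : (starRingEnd ℂ) ⟪p, A p⟫ = ⟪A p, p⟫ := inner_conj_symm _ _
  have h2 : ⟪A p, p⟫ = ⟪p, A p⟫ := sa_inner_symm hA p p
  exact ((RCLike.conj_eq_iff_re).mp (h1.trans h2)).symm

lemma eq_smul_Pp_of_range {A : H →L[ℂ] H} (hA : IsSelfAdjoint A) {p : H} (hp : ‖p‖ = 1)
    (hr : ∀ x, A x ∈ (ℂ ∙ p)) : A = ⟪p, A p⟫ • Pp p := by
  have hAp : A p = ⟪p, A p⟫ • p := span_unit_coeff hp (hr p)
  have h4 : (starRingEnd ℂ) ⟪p, A p⟫ = ⟪p, A p⟫ := by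
    rw [real_coeff hA p]
    exact Complex.conj_ofReal _
  ext x
  have h1 : A x = ⟪p, A x⟫ • p := span_unit_coeff hp (hr x)
  have hc : ⟪p, A x⟫ = ⟪p, A p⟫ * ⟪p, x⟫ := by
    rw [← sa_inner_symm hA p x]
    nth_rewrite 1 [hAp]
    rw [inner_smul_left, h4]
  rw [ContinuousLinearMap.smul_apply, Pp_apply hp, h1, hc, mul_smul]

lemma re_inner_smul_real (μ : ℝ) (T : H →L[ℂ] H) (x : H) :
    RCLike.re ⟪((μ : ℂ) • T) x, x⟫ = μ * RCLike.re ⟪T x, x⟫ := by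
  rw [ContinuousLinearMap.smul_apply, inner_smul_left, Complex.conj_ofReal]
  simp [Complex.mul_re]

lemma smul_real_sa {μ : ℝ} {T : H →L[ℂ] H} (hT : IsSelfAdjoint T) :
    IsSelfAdjoint ((μ : ℂ) • T) := by
  have h : IsSelfAdjoint (μ : ℂ) := by
    rw [IsSelfAdjoint, RCLike.star_def]
    exact Complex.conj_ofReal μ
  exact h.smul hT

lemma smul_real_nonneg {μ : ℝ} (hμ : 0 ≤ μ) {T : H →L[ℂ] H} (hT : 0 ≤ T) :
    0 ≤ (μ : ℂ) • T := by
  have hTsa := nonneg_isSelfAdjoint hT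
  rw [le_iff_re_inner (by simp : IsSelfAdjoint (0 : H →L[ℂ] H)) (smul_real_sa hTsa)]
  intro x
  rw [re_inner_smul_real]
  simp only [ContinuousLinearMap.zero_apply, inner_zero_left, map_zero]
  have := re_inner_nonneg hT x
  positivity

/-- structure of effects below a rank-one projection -/
lemma le_Pp_structure {B : H →L[ℂ] H} (hB0 : 0 ≤ B) {p : H} (hp : ‖p‖ = 1)
    (hBP : B ≤ Pp p) : ∃ μ : ℝ, 0 ≤ μ ∧ B = (μ : ℂ) • Pp p := by
  have hBsa := nonneg_isSelfAdjoint hB0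
  have hform := (le_iff_re_inner hBsa (Pp_sa p)).mp hBP
  have hkill : ∀ y : H, ⟪p, y⟫ = 0 → B y = 0 := by
    intro y hy
    apply pos_apply_eq_zero hB0
    have := hform y
    rw [re_inner_Pp hp, hy] at this
    simpa using this
  have hBp_mem : B p ∈ (ℂ ∙ p) := by
    set y := B p - ⟪p, B p⟫ • p with hydef
    have hpy : ⟪p, y⟫ = 0 := by
      rw [hydef, inner_sub_right, inner_smul_right, inner_self_eq_norm_sq_to_K, hp]
      norm_num
    have hBy : B y = 0 := hkill y hpy
    have hyp : ⟪y, p⟫ = 0 := by rw [← inner_conj_symm, hpy, map_zero]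
    have hsplit : B p = ⟪p, B p⟫ • p + y := by rw [hydef]; abel
    have hyBp : ⟪y, B p⟫ = ⟪y, y⟫ := by
      nth_rewrite 1 [hsplit]
      rw [inner_add_right, inner_smul_right, hyp, mul_zero, zero_add]
    have hyBp' : ⟪y, B p⟫ = 0 := by
      rw [← sa_inner_symm hBsa y p, hBy, inner_zero_left]
    have hy00 : y = 0 := by
      have : (⟪y, y⟫ : ℂ) = 0 := by rw [← hyBp, hyBp']
      exact inner_self_eq_zero.mp this
    have hBp : B p = ⟪p, B p⟫ • p := by
      nth_rewrite 1 [hsplit]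
      rw [hy00, add_zero]
    rw [hBp]
    exact Submodule.smul_mem _ _ (Submodule.mem_span_singleton_self p)
  have hr : ∀ x, B x ∈ (ℂ ∙ p) := by
    intro x
    set y := x - ⟪p, x⟫ • p with hydef
    have hpy : ⟪p, y⟫ = 0 := by
      rw [hydef, inner_sub_right, inner_smul_right, inner_self_eq_norm_sq_to_K, hp]
      norm_num
    have hx : x = ⟪p, x⟫ • p + y := by rw [hydef]; abel
    have hBx : B (⟪p, x⟫ • p + y) = ⟪p, x⟫ • B p := by
      rw [map_add, map_smul, hkill y hpy, add_zero]
    rw [← hx] at hBx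
    rw [hBx]
    exact Submodule.smul_mem _ _ hBp_mem
  refine ⟨RCLike.re ⟪p, B p⟫, ?_, ?_⟩
  · rw [inner_re_symm]
    exact re_inner_nonneg hB0 p
  · have := eq_smul_Pp_of_range hBsa hp hr
    rwa [real_coeff hBsa p] at this


def Eff (A : H →L[ℂ] H) : Prop := 0 ≤ A ∧ A ≤ 1

def ChainE (A : H →L[ℂ] H) : Prop :=
  Eff A ∧ ∀ B C : H →L[ℂ] H, 0 ≤ B → B ≤ A → 0 ≤ C → C ≤ A → (B ≤ C ∨ C ≤ B)

def MaxCh (A : H →L[ℂ] H) : Prop := ChainE A ∧ ∀ B, ChainE B → A ≤ B → A = B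

def R1 (A : H →L[ℂ] H) : Prop := ∃ p : H, ‖p‖ = 1 ∧ A = Pp p

lemma smul_Pp_mono {p : H} (hp : ‖p‖ = 1) {μ ν : ℝ} (h : μ ≤ ν) :
    (μ : ℂ) • Pp p ≤ (ν : ℂ) • Pp p := by
  rw [le_iff_re_inner (smul_real_sa (Pp_sa p)) (smul_real_sa (Pp_sa p))]
  intro x
  rw [re_inner_smul_real, re_inner_smul_real]
  have h0 := re_inner_nonneg (Pp_nonneg p) x
  nlinarith

lemma re_inner_Pp_self {p : H} (hp : ‖p‖ = 1) : RCLike.re ⟪Pp p p, p⟫ = 1 := by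
  rw [Pp_self hp, inner_self_eq_norm_sq, hp]
  norm_num

lemma chainE_Pp {p : H} (hp : ‖p‖ = 1) : ChainE (Pp p) := by
  refine ⟨⟨Pp_nonneg p, Pp_le_one p⟩, fun B C hB0 hBP hC0 hCP => ?_⟩
  obtain ⟨μ, hμ0, hμeq⟩ := le_Pp_structure hB0 hp hBP
  obtain ⟨ν, hν0, hνeq⟩ := le_Pp_structure hC0 hp hCP
  rcases le_total μ ν with h | h
  · left; rw [hμeq, hνeq]; exact smul_Pp_mono hp h
  · right; rw [hμeq, hνeq]; exact smul_Pp_mono hp h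

lemma Pp_ne_zero {p : H} (hp : ‖p‖ = 1) : Pp p ≠ 0 := by
  intro h
  have := Pp_self hp
  rw [h] at this
  simp only [ContinuousLinearMap.zero_apply] at this
  rw [← this] at hp
  simp at hp

lemma half_smul_le {B : H →L[ℂ] H} (hB0 : 0 ≤ B) :
    ((2⁻¹ : ℝ) : ℂ) • B ≤ B := by
  have hBsa := nonneg_isSelfAdjoint hB0
  rw [le_iff_re_inner (smul_real_sa hBsa) hBsa]
  intro x
  rw [re_inner_smul_real]
  have := re_inner_nonneg hB0 x
  nlinarith

lemma maxch_Pp {p : H} (hp : ‖p‖ = 1) : MaxCh (Pp p) := by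
  refine ⟨chainE_Pp hp, fun B hB hPB => ?_⟩
  have hB0 : 0 ≤ B := le_trans (Pp_nonneg p) hPB
  have hB1 : B ≤ 1 := hB.1.2
  have hBsa := nonneg_isSelfAdjoint hB0
  have hBp_ge : 1 ≤ RCLike.re ⟪B p, p⟫ := by
    have := (le_iff_re_inner (Pp_sa p) hBsa).mp hPB p
    rwa [re_inner_Pp_self hp] at this
  have hBp_le : RCLike.re ⟪B p, p⟫ ≤ 1 := by
    have := (le_iff_re_inner hBsa (IsSelfAdjoint.one (H →L[ℂ] H))).mp hB1 p
    rwa [re_inner_one, hp, one_pow] at this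
  have hX0 : 0 ≤ ((2⁻¹ : ℝ) : ℂ) • B := smul_real_nonneg (by norm_num) hB0
  have hXB : ((2⁻¹ : ℝ) : ℂ) • B ≤ B := half_smul_le hB0
  rcases hB.2 (((2⁻¹ : ℝ) : ℂ) • B) (Pp p) hX0 hXB (Pp_nonneg p) hPB with hcase | hcase
  · -- (1/2) B ≤ Pp p, so B is a multiple of Pp p
    obtain ⟨μ, hμ0, hμeq⟩ := le_Pp_structure hX0 hp hcase
    have hBeq : B = ((2 * μ : ℝ) : ℂ) • Pp p := by
      have h2 : ((2 : ℝ) : ℂ) • (((2⁻¹ : ℝ) : ℂ) • B) = B := by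
        rw [smul_smul]
        norm_num
      rw [← h2, hμeq, smul_smul]
      norm_cast
    have heval : RCLike.re ⟪B p, p⟫ = 2 * μ := by
      rw [hBeq, re_inner_smul_real, re_inner_Pp_self hp, mul_one]
    have hμ1 : 2 * μ = 1 := by
      rw [heval] at hBp_ge hBp_le
      linarith
    rw [hBeq, hμ1]
    norm_num
  · -- Pp p ≤ (1/2) B : impossible
    exfalso
    have := (le_iff_re_inner (Pp_sa p) (smul_real_sa hBsa)).mp hcase p
    rw [re_inner_Pp_self hp, re_inner_smul_real] at this
    linarith

lemma R1_maxch {A : H →L[ℂ] H} (h : R1 A) : MaxCh A := by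
  obtain ⟨p, hp, rfl⟩ := h
  exact maxch_Pp hp

lemma conj_nonneg {S T : H →L[ℂ] H} (hSsa : IsSelfAdjoint S) (hT : 0 ≤ T) :
    0 ≤ S ∘L T ∘L S := by
  have := ((nonneg_iff_isPositive T).mp hT).adjoint_conj S
  rw [hSsa.adjoint_eq] at this
  exact (nonneg_iff_isPositive _).mpr this

lemma re_inner_conj {S : H →L[ℂ] H} (hSsa : IsSelfAdjoint S) (T : H →L[ℂ] H) (x : H) :
    RCLike.re ⟪(S ∘L T ∘L S) x, x⟫ = RCLike.re ⟪T (S x), S x⟫ := by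
  have h : (S ∘L T ∘L S) x = S (T (S x)) := rfl
  rw [h, sa_inner_symm hSsa]

lemma conj_le {A S T : H →L[ℂ] H} (hSsa : IsSelfAdjoint S) (hSS : S * S = A)
    (hT1 : T ≤ 1) : S ∘L T ∘L S ≤ A := by
  have h1 : 0 ≤ (1 : H →L[ℂ] H) - T := (nonneg_iff_isPositive _).mpr ((le_def T 1).mp hT1)
  have h2 : 0 ≤ S ∘L ((1 : H →L[ℂ] H) - T) ∘L S := conj_nonneg hSsa h1
  have h3 : S ∘L ((1 : H →L[ℂ] H) - T) ∘L S = A - S ∘L T ∘L S := by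
    ext x
    have : (S ∘L ((1 : H →L[ℂ] H) - T) ∘L S) x = S (S x - T (S x)) := rfl
    rw [this, map_sub]
    have hA : A x = S (S x) := by rw [← hSS, mul_apply_eq_comp]
    rw [ContinuousLinearMap.sub_apply, hA]
    rfl
  rw [le_def]
  rw [h3] at h2
  exact (nonneg_iff_isPositive _).mp h2

/-- A maximal chain effect is a rank-one projection. -/
lemma maxch_R1 {A : H →L[ℂ] H} {e : H} (he : ‖e‖ = 1) (h : MaxCh A) : R1 A := by
  obtain ⟨⟨⟨hA0, hA1⟩, hchain⟩, hmax⟩ := h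
  have hAsa := nonneg_isSelfAdjoint hA0
  have hAne : A ≠ 0 := by
    intro h0
    have := hmax (Pp e) (chainE_Pp he) (h0 ▸ Pp_nonneg e)
    exact Pp_ne_zero he (h0 ▸ this.symm)
  set S := CFC.sqrt A with hSdef
  have hS0 : 0 ≤ S := CFC.sqrt_nonneg _
  have hSS : S * S = A := CFC.sqrt_mul_sqrt_self A hA0
  have hSsa : IsSelfAdjoint S := nonneg_isSelfAdjoint hS0
  have hSne : S ≠ 0 := by
    intro h0
    apply hAne
    rw [← hSS, h0, mul_zero]
  obtain ⟨x₀, hx₀⟩ : ∃ x, S x ≠ 0 := by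
    by_contra hc
    push_neg at hc
    exact hSne (ContinuousLinearMap.ext fun x => by rw [hc x]; rfl)
  set a := S x₀ with hadef
  have hline : ∀ x, S x ∈ (ℂ ∙ a) := by
    intro x
    by_contra hmem
    set b := S x with hbdef
    set c : ℂ := ⟪a, b⟫ / ((‖a‖ : ℂ) ^ 2) with hcdef
    set w := b - c • a with hwdef
    have hw_ne : w ≠ 0 := by
      intro h0
      apply hmem
      rw [hwdef, sub_eq_zero] at h0
      show S x ∈ Submodule.span ℂ {a}
      rw [← hbdef, h0]
      exact Submodule.smul_mem _ _ (Submodule.mem_span_singleton_self a)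
    have haw : ⟪a, w⟫ = 0 := by
      rw [hwdef, inner_sub_right, inner_smul_right, hcdef, inner_self_eq_norm_sq_to_K, RCLike.ofReal_eq_complex_ofReal]
      have : ((‖a‖ : ℂ) ^ 2) ≠ 0 := by
        norm_cast
        exact pow_ne_zero 2 (norm_ne_zero_iff.mpr hx₀)
      rw [div_mul_cancel₀ _ this, sub_self]
    set u := (‖a‖ : ℂ)⁻¹ • a with hudef
    set v := (‖w‖ : ℂ)⁻¹ • w with hvdef
    have hu : ‖u‖ = 1 := by
      rw [hudef, norm_smul]
      simp [norm_ne_zero_iff.mpr hx₀]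
    have hv : ‖v‖ = 1 := by
      rw [hvdef, norm_smul]
      simp [norm_ne_zero_iff.mpr hw_ne]
    set Tu := S ∘L Pp u ∘L S with hTudef
    set Tv := S ∘L Pp v ∘L S with hTvdef
    have hTu0 : 0 ≤ Tu := conj_nonneg hSsa (Pp_nonneg u)
    have hTv0 : 0 ≤ Tv := conj_nonneg hSsa (Pp_nonneg v)
    have hTuA : Tu ≤ A := conj_le hSsa hSS (Pp_le_one u)
    have hTvA : Tv ≤ A := conj_le hSsa hSS (Pp_le_one v)
    have hua : ⟪u, a⟫ = (‖a‖ : ℂ) := by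
      rw [hudef, inner_smul_left, inner_self_eq_norm_sq_to_K]
      rw [RCLike.ofReal_eq_complex_ofReal, map_inv₀, Complex.conj_ofReal]
      have : (‖a‖ : ℂ) ≠ 0 := by
        norm_cast
        exact norm_ne_zero_iff.mpr hx₀
      field_simp
    have hva : ⟪v, a⟫ = 0 := by
      rw [hvdef, inner_smul_left]
      have : ⟪w, a⟫ = 0 := by rw [← inner_conj_symm, haw, map_zero]
      rw [this, mul_zero]
    have huw : ⟪u, w⟫ = 0 := by
      rw [hudef, inner_smul_left, haw, mul_zero]
    have hvw : ⟪v, w⟫ = (‖w‖ : ℂ) := by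
      rw [hvdef, inner_smul_left, inner_self_eq_norm_sq_to_K]
      rw [RCLike.ofReal_eq_complex_ofReal, map_inv₀, Complex.conj_ofReal]
      have : (‖w‖ : ℂ) ≠ 0 := by
        norm_cast
        exact norm_ne_zero_iff.mpr hw_ne
      field_simp
    -- the vector mapped to w
    set x' := x - c • x₀ with hx'def
    have hSx' : S x' = w := by
      rw [hx'def, map_sub, map_smul]
    rcases hchain Tu Tv hTu0 hTuA hTv0 hTvA with hc1 | hc1
    · have := (le_iff_re_inner (nonneg_isSelfAdjoint hTu0) (nonneg_isSelfAdjoint hTv0)).mp hc1 x₀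
      rw [hTudef, hTvdef, re_inner_conj hSsa, re_inner_conj hSsa] at this
      rw [← hadef, re_inner_Pp hu, re_inner_Pp hv, hua, hva] at this
      simp only [norm_zero] at this
      have : ‖(‖a‖ : ℂ)‖ ^ 2 ≤ 0 := by linarith
      rw [Complex.norm_real, norm_norm] at this
      have ha' : 0 < ‖a‖ := norm_pos_iff.mpr hx₀
      nlinarith
    · have := (le_iff_re_inner (nonneg_isSelfAdjoint hTv0) (nonneg_isSelfAdjoint hTu0)).mp hc1 x'
      rw [hTudef, hTvdef, re_inner_conj hSsa, re_inner_conj hSsa] at this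
      rw [hSx', re_inner_Pp hu, re_inner_Pp hv, huw, hvw] at this
      simp only [norm_zero] at this
      have : ‖(‖w‖ : ℂ)‖ ^ 2 ≤ 0 := by linarith
      rw [Complex.norm_real, norm_norm] at this
      have hw' : 0 < ‖w‖ := norm_pos_iff.mpr hw_ne
      nlinarith
  -- now A has rank one
  set p := (‖a‖ : ℂ)⁻¹ • a with hpdef
  have hp : ‖p‖ = 1 := by
    rw [hpdef, norm_smul]
    simp [norm_ne_zero_iff.mpr hx₀]
  have hrange : ∀ x, A x ∈ (ℂ ∙ p) := by
    intro x
    have h1 : A x = S (S x) := by rw [← hSS, mul_apply_eq_comp]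
    obtain ⟨z, hz⟩ := Submodule.mem_span_singleton.mp (hline (S x))
    have h2 : a = (‖a‖ : ℂ) • p := by
      rw [hpdef, smul_smul]
      have : (‖a‖ : ℂ) ≠ 0 := by norm_cast; exact norm_ne_zero_iff.mpr hx₀
      rw [mul_inv_cancel₀ this, one_smul]
    rw [h1, ← hz, h2, smul_smul]
    exact Submodule.smul_mem _ _ (Submodule.mem_span_singleton_self p)
  have hAeq := eq_smul_Pp_of_range hAsa hp hrange
  set μ : ℝ := RCLike.re ⟪p, A p⟫ with hμdef
  have hAeq' : A = (μ : ℂ) • Pp p := by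
    rw [hAeq, real_coeff hAsa p, ← hμdef]
  have hμ0 : 0 ≤ μ := by
    rw [hμdef, inner_re_symm]
    exact re_inner_nonneg hA0 p
  have hμpos : 0 < μ := by
    rcases hμ0.lt_or_eq with h | h
    · exact h
    · exfalso
      apply hAne
      rw [hAeq', ← h]
      norm_num
  have hμ1 : μ ≤ 1 := by
    have h1 := (le_iff_re_inner hAsa (IsSelfAdjoint.one (H →L[ℂ] H))).mp hA1 p
    rw [re_inner_one, hp, one_pow] at h1
    have h2 : RCLike.re ⟪A p, p⟫ = μ := by
      rw [inner_re_symm, ← hμdef]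
    linarith
  have hAle : A ≤ Pp p := by
    have := smul_Pp_mono hp hμ1
    rw [hAeq']
    simpa using this
  have := hmax (Pp p) (chainE_Pp hp) hAle
  exact ⟨p, hp, this⟩


def IsLUBE (s : Set (H →L[ℂ] H)) (A : H →L[ℂ] H) : Prop :=
  Eff A ∧ (∀ B ∈ s, B ≤ A) ∧ ∀ C, Eff C → (∀ B ∈ s, B ≤ C) → A ≤ C

lemma IsLUBE.unique {s : Set (H →L[ℂ] H)} {A A' : H →L[ℂ] H}
    (h : IsLUBE s A) (h' : IsLUBE s A') : A = A' :=
  le_antisymm (h.2.2 A' h'.1 h'.2.1) (h'.2.2 A h.1 h.2.1)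

lemma isLUBE_PV' {ι : Sort*} (f : ι → H) (hf : ∀ i, ‖f i‖ = 1)
    (V : Submodule ℂ H) [CompleteSpace V]
    (hV : (Submodule.span ℂ (Set.range f)).topologicalClosure = V) :
    IsLUBE (Set.range fun i => Pp (f i)) (PV V) := by
  refine ⟨⟨PV_nonneg V, PV_le_one V⟩, ?_, ?_⟩
  · rintro B ⟨i, rfl⟩
    apply Pp_le_PV (hf i) V
    rw [← hV]
    exact Submodule.le_topologicalClosure _ (Submodule.subset_span (Set.mem_range_self i))
  · intro C hC hub
    have hfixgen : ∀ p ∈ Set.range f, C p = p := by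
      rintro p ⟨i, rfl⟩
      exact fix_of_Pp_le hC.2 (hf i) (hub _ (Set.mem_range_self i))
    have hfix : ∀ v ∈ V, C v = v := by
      rw [← hV]
      exact fix_closure hfixgen
    exact PV_le_of_fix hC.1 V hfix

lemma isLUBE_PV {ι : Sort*} (f : ι → H) (hf : ∀ i, ‖f i‖ = 1) :
    haveI : CompleteSpace ((Submodule.span ℂ (Set.range f)).topologicalClosure) :=
      (Submodule.isClosed_topologicalClosure _).completeSpace_coe
    IsLUBE (Set.range fun i => Pp (f i))
      (PV (Submodule.span ℂ (Set.range f)).topologicalClosure) := by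
  haveI : CompleteSpace ((Submodule.span ℂ (Set.range f)).topologicalClosure) :=
    (Submodule.isClosed_topologicalClosure _).completeSpace_coe
  exact isLUBE_PV' f hf _ rfl

lemma span_range_std (V : Submodule ℂ H) [FiniteDimensional ℂ V] :
    Submodule.span ℂ (Set.range fun i => ((stdOrthonormalBasis ℂ V) i : H)) = V := by
  set b := stdOrthonormalBasis ℂ V
  have h1 : Set.range (fun i => ((b i : H))) = V.subtype '' Set.range ⇑b := by
    rw [← Set.range_comp]
    rfl
  rw [h1, Submodule.span_image]
  have h2 : Submodule.span ℂ (Set.range ⇑b) = ⊤ := by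
    rw [← OrthonormalBasis.coe_toBasis b]
    exact Module.Basis.span_eq _
  rw [h2, Submodule.map_subtype_top]

lemma range_closed_of_proj {A : H →L[ℂ] H} (hidem : A * A = A) :
    IsClosed ((LinearMap.range (A : H →ₗ[ℂ] H) : Submodule ℂ H) : Set H) := by
  have h : ((LinearMap.range (A : H →ₗ[ℂ] H) : Submodule ℂ H) : Set H) = {x | A x = x} := by
    ext x
    constructor
    · rintro ⟨y, rfl⟩
      have := congrArg (fun T : H →L[ℂ] H => T y) hidem
      simpa [mul_apply_eq_comp] using this
    · intro hx
      exact ⟨x, hx⟩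
  rw [h]
  exact isClosed_eq A.continuous continuous_id

lemma proj_eq_PV {A : H →L[ℂ] H} (hsa : IsSelfAdjoint A) (hidem : A * A = A) :
    haveI : CompleteSpace (LinearMap.range (A : H →ₗ[ℂ] H) : Submodule ℂ H) :=
      (range_closed_of_proj hidem).completeSpace_coe
    A = PV (LinearMap.range (A : H →ₗ[ℂ] H)) := by
  haveI : CompleteSpace (LinearMap.range (A : H →ₗ[ℂ] H) : Submodule ℂ H) :=
    (range_closed_of_proj hidem).completeSpace_coe
  ext x
  symm
  have hmem : A x ∈ LinearMap.range (A : H →ₗ[ℂ] H) := ⟨x, rfl⟩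
  have horth : ∀ w ∈ LinearMap.range (A : H →ₗ[ℂ] H), ⟪x - A x, w⟫ = 0 := by
    rintro w ⟨y, rfl⟩
    rw [ContinuousLinearMap.coe_coe, ← sa_inner_symm hsa (x - A x) y, map_sub]
    have : A (A x) = A x := by
      have := congrArg (fun T : H →L[ℂ] H => T x) hidem
      simpa [mul_apply_eq_comp] using this
    rw [this, sub_self, inner_zero_left]
  exact Submodule.eq_starProjection_of_mem_of_inner_eq_zero hmem horth

/-- An effect is an (idempotent, self-adjoint) projection iff it is the least upper bound
within the effect interval of a set of rank-one projections. -/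
lemma proj_iff_lub {A : H →L[ℂ] H} (hA : Eff A) :
    (A * A = A ∧ IsSelfAdjoint A) ↔ ∃ s : Set (H →L[ℂ] H), (∀ B ∈ s, R1 B) ∧ IsLUBE s A := by
  constructor
  · rintro ⟨hidem, hsa⟩
    haveI : CompleteSpace (LinearMap.range (A : H →ₗ[ℂ] H) : Submodule ℂ H) :=
      (range_closed_of_proj hidem).completeSpace_coe
    set V : Submodule ℂ H := LinearMap.range (A : H →ₗ[ℂ] H) with hVdef
    have hAPV : A = PV V := proj_eq_PV hsa hidem
    refine ⟨{B | ∃ p : H, ‖p‖ = 1 ∧ p ∈ V ∧ B = Pp p}, ?_, ?_, ?_, ?_⟩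
    · rintro B ⟨p, hp, hpV, rfl⟩
      exact ⟨p, hp, rfl⟩
    · exact hA
    · rintro B ⟨p, hp, hpV, rfl⟩
      rw [hAPV]
      exact Pp_le_PV hp V hpV
    · intro C hC hub
      have hfix : ∀ v ∈ V, C v = v := by
        intro v hv
        rcases eq_or_ne v 0 with rfl | hv0
        · exact map_zero C
        · set p := (‖v‖ : ℂ)⁻¹ • v with hpdef
          have hvnorm : (‖v‖ : ℂ) ≠ 0 := by
            norm_cast
            exact norm_ne_zero_iff.mpr hv0
          have hp : ‖p‖ = 1 := by
            rw [hpdef, norm_smul]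
            simp [norm_ne_zero_iff.mpr hv0]
          have hpV : p ∈ V := Submodule.smul_mem _ _ hv
          have hfixp : C p = p := fix_of_Pp_le hC.2 hp (hub _ ⟨p, hp, hpV, rfl⟩)
          have hvp : v = (‖v‖ : ℂ) • p := by
            rw [hpdef, smul_smul, mul_inv_cancel₀ hvnorm, one_smul]
          rw [hvp, map_smul, hfixp]
      rw [hAPV]
      exact PV_le_of_fix hC.1 V hfix
  · rintro ⟨s, hsR1, hlub⟩
    have hchoice : ∀ B : {B // B ∈ s}, ∃ p : H, ‖p‖ = 1 ∧ (B : H →L[ℂ] H) = Pp p :=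
      fun B => hsR1 B B.2
    choose f hf1 hf2 using hchoice
    have hrange : (Set.range fun i : {B // B ∈ s} => Pp (f i)) = s := by
      ext B
      constructor
      · rintro ⟨i, rfl⟩
        show Pp (f i) ∈ s
        rw [← hf2 i]
        exact i.2
      · intro hB
        exact ⟨⟨B, hB⟩, (hf2 ⟨B, hB⟩).symm⟩
    haveI : CompleteSpace ((Submodule.span ℂ (Set.range f)).topologicalClosure) :=
      (Submodule.isClosed_topologicalClosure _).completeSpace_coe
    have := isLUBE_PV' f hf1 _ rfl
    rw [hrange] at this
    have hAeq := hlub.unique this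
    rw [hAeq]
    exact ⟨PV_idem _, PV_sa _⟩


def ESet : Set (H →L[ℂ] H) := {A | 0 ≤ A ∧ A ≤ 1}

section Transfer

variable (phi : (H →L[ℂ] H) → (H →L[ℂ] H))

lemma chain_transfer (hbij : Set.BijOn phi (ESet (H := H)) ESet)
    (horder : ∀ A ∈ ESet (H := H), ∀ B ∈ ESet (H := H), (A ≤ B ↔ phi A ≤ phi B))
    {A : H →L[ℂ] H} (hA : A ∈ ESet) : ChainE A ↔ ChainE (phi A) := by
  have hphiA : phi A ∈ ESet := hbij.mapsTo hA
  constructor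
  · intro hch
    refine ⟨hphiA, fun B' C' hB0 hBle hC0 hCle => ?_⟩
    have hB'E : B' ∈ ESet (H := H) := ⟨hB0, hBle.trans hphiA.2⟩
    have hC'E : C' ∈ ESet (H := H) := ⟨hC0, hCle.trans hphiA.2⟩
    obtain ⟨B, hBE, rfl⟩ := hbij.surjOn hB'E
    obtain ⟨C, hCE, rfl⟩ := hbij.surjOn hC'E
    have hBA : B ≤ A := (horder B hBE A hA).mpr hBle
    have hCA : C ≤ A := (horder C hCE A hA).mpr hCle
    rcases hch.2 B C hBE.1 hBA hCE.1 hCA with h | h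
    · exact Or.inl ((horder B hBE C hCE).mp h)
    · exact Or.inr ((horder C hCE B hBE).mp h)
  · intro hch
    refine ⟨hA, fun B C hB0 hBA hC0 hCA => ?_⟩
    have hBE : B ∈ ESet (H := H) := ⟨hB0, hBA.trans hA.2⟩
    have hCE : C ∈ ESet (H := H) := ⟨hC0, hCA.trans hA.2⟩
    have hB' : phi B ≤ phi A := (horder B hBE A hA).mp hBA
    have hC' : phi C ≤ phi A := (horder C hCE A hA).mp hCA
    rcases hch.2 (phi B) (phi C) (hbij.mapsTo hBE).1 hB' (hbij.mapsTo hCE).1 hC' with h | h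
    · exact Or.inl ((horder B hBE C hCE).mpr h)
    · exact Or.inr ((horder C hCE B hBE).mpr h)

lemma maxch_transfer (hbij : Set.BijOn phi (ESet (H := H)) ESet)
    (horder : ∀ A ∈ ESet (H := H), ∀ B ∈ ESet (H := H), (A ≤ B ↔ phi A ≤ phi B))
    {A : H →L[ℂ] H} (hA : A ∈ ESet) : MaxCh A ↔ MaxCh (phi A) := by
  constructor
  · intro h
    refine ⟨(chain_transfer phi hbij horder hA).mp h.1, fun B' hB' hle => ?_⟩
    have hB'E : B' ∈ ESet (H := H) := hB'.1
    obtain ⟨B, hBE, rfl⟩ := hbij.surjOn hB'E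
    have hchB : ChainE B := (chain_transfer phi hbij horder hBE).mpr hB'
    have hAB : A ≤ B := (horder A hA B hBE).mpr hle
    exact congrArg phi (h.2 B hchB hAB)
  · intro h
    refine ⟨(chain_transfer phi hbij horder hA).mpr h.1, fun B hB hAB => ?_⟩
    have hBE : B ∈ ESet (H := H) := hB.1
    have hchB' : ChainE (phi B) := (chain_transfer phi hbij horder hBE).mp hB
    have hle : phi A ≤ phi B := (horder A hA B hBE).mp hAB
    exact hbij.injOn hA hBE (h.2 (phi B) hchB' hle)

lemma lub_transfer (hbij : Set.BijOn phi (ESet (H := H)) ESet)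
    (horder : ∀ A ∈ ESet (H := H), ∀ B ∈ ESet (H := H), (A ≤ B ↔ phi A ≤ phi B))
    {s : Set (H →L[ℂ] H)} {A : H →L[ℂ] H} (hs : s ⊆ ESet) (hA : A ∈ ESet)
    (h : IsLUBE s A) : IsLUBE (phi '' s) (phi A) := by
  refine ⟨hbij.mapsTo hA, ?_, ?_⟩
  · rintro B' ⟨B, hBs, rfl⟩
    exact (horder B (hs hBs) A hA).mp (h.2.1 B hBs)
  · intro C' hC' hub
    obtain ⟨C, hCE, rfl⟩ := hbij.surjOn hC'
    have hubC : ∀ B ∈ s, B ≤ C := fun B hBs =>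
      (horder B (hs hBs) C hCE).mpr (hub _ (Set.mem_image_of_mem _ hBs))
    exact (horder A hA C hCE).mp (h.2.2 C hCE hubC)

lemma proj_forward (hbij : Set.BijOn phi (ESet (H := H)) ESet)
    (horder : ∀ A ∈ ESet (H := H), ∀ B ∈ ESet (H := H), (A ≤ B ↔ phi A ≤ phi B))
    {e : H} (he : ‖e‖ = 1) {A : H →L[ℂ] H} (hA : A ∈ ESet)
    (hidem : A * A = A) (hsa : IsSelfAdjoint A) :
    phi A * phi A = phi A ∧ IsSelfAdjoint (phi A) := by
  obtain ⟨s, hsR1, hlub⟩ := (proj_iff_lub hA).mp ⟨hidem, hsa⟩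
  have hs : s ⊆ ESet (H := H) := fun B hB => by
    obtain ⟨p, hp, rfl⟩ := hsR1 B hB
    exact ⟨Pp_nonneg p, Pp_le_one p⟩
  have hlub' := lub_transfer phi hbij horder hs hA hlub
  have hR1' : ∀ B' ∈ phi '' s, R1 B' := by
    rintro B' ⟨B, hBs, rfl⟩
    exact maxch_R1 he ((maxch_transfer phi hbij horder (hs hBs)).mp (R1_maxch (hsR1 B hBs)))
  exact (proj_iff_lub (hbij.mapsTo hA)).mpr ⟨phi '' s, hR1', hlub'⟩

lemma rank_forward (hbij : Set.BijOn phi (ESet (H := H)) ESet)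
    (horder : ∀ A ∈ ESet (H := H), ∀ B ∈ ESet (H := H), (A ≤ B ↔ phi A ≤ phi B))
    {e : H} (he : ‖e‖ = 1) {A : H →L[ℂ] H} (hA : A ∈ ESet)
    (hidem : A * A = A) (hsa : IsSelfAdjoint A)
    (hfin : FiniteDimensional ℂ (LinearMap.range (A : H →ₗ[ℂ] H))) :
    FiniteDimensional ℂ (LinearMap.range (phi A : H →ₗ[ℂ] H)) ∧
      Module.finrank ℂ (LinearMap.range (phi A : H →ₗ[ℂ] H)) ≤ Module.finrank ℂ (LinearMap.range (A : H →ₗ[ℂ] H)) := by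
  classical
  haveI : CompleteSpace (LinearMap.range (A : H →ₗ[ℂ] H) : Submodule ℂ H) :=
    (range_closed_of_proj hidem).completeSpace_coe
  haveI := hfin
  set n := Module.finrank ℂ (LinearMap.range (A : H →ₗ[ℂ] H) : Submodule ℂ H) with hndef
  set b := stdOrthonormalBasis ℂ (LinearMap.range (A : H →ₗ[ℂ] H) : Submodule ℂ H) with hbdef
  set f : Fin n → H := fun i => (b i : H) with hfdef
  have hf1 : ∀ i, ‖f i‖ = 1 := fun i => by
    have := b.orthonormal.1 i
    exact this
  have hspan : Submodule.span ℂ (Set.range f) = LinearMap.range (A : H →ₗ[ℂ] H) := by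
    rw [hfdef, hbdef]
    exact span_range_std _
  have hlub : IsLUBE (Set.range fun i => Pp (f i)) A := by
    have h := isLUBE_PV' f hf1 (LinearMap.range (A : H →ₗ[ℂ] H))
      (by rw [hspan]; exact (range_closed_of_proj hidem).submodule_topologicalClosure_eq)
    rwa [← proj_eq_PV hsa hidem] at h
  have hsE : (Set.range fun i => Pp (f i)) ⊆ ESet (H := H) := by
    rintro B ⟨i, rfl⟩
    exact ⟨Pp_nonneg _, Pp_le_one _⟩
  have hlub' := lub_transfer phi hbij horder hsE hA hlub
  have hR1' : ∀ i : Fin n, R1 (phi (Pp (f i))) := fun i =>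
    maxch_R1 he ((maxch_transfer phi hbij horder (hsE ⟨i, rfl⟩)).mp (maxch_Pp (hf1 i)))
  choose g hg1 hg2 using hR1'
  have himg : phi '' (Set.range fun i => Pp (f i)) = Set.range fun i => Pp (g i) := by
    rw [← Set.range_comp]
    exact congrArg Set.range (funext fun i => hg2 i)
  rw [himg] at hlub'
  haveI : CompleteSpace ((Submodule.span ℂ (Set.range g)).topologicalClosure) :=
    (Submodule.isClosed_topologicalClosure _).completeSpace_coe
  have hlubW := isLUBE_PV' g hg1 _ rfl
  have hphiA : phi A = PV ((Submodule.span ℂ (Set.range g)).topologicalClosure) :=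
    hlub'.unique hlubW
  haveI hfinspan : FiniteDimensional ℂ (Submodule.span ℂ (Set.range g)) :=
    FiniteDimensional.span_of_finite ℂ (Set.finite_range g)
  have hWeq : (Submodule.span ℂ (Set.range g)).topologicalClosure
      = Submodule.span ℂ (Set.range g) :=
    (Submodule.closed_of_finiteDimensional _).submodule_topologicalClosure_eq
  have hrange' : LinearMap.range (phi A : H →ₗ[ℂ] H) = Submodule.span ℂ (Set.range g) := by
    rw [hphiA, PV_range, hWeq]
  constructor
  · rw [hrange']
    exact hfinspan
  · rw [hrange']
    have hb1 : Module.finrank ℂ (Submodule.span ℂ (Set.range g))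
        ≤ (Set.range g).toFinset.card := finrank_span_le_card _
    have hcard : (Set.range g).toFinset.card ≤ n := by
      rw [Set.toFinset_range]
      exact (Finset.card_image_le).trans (by simp)
    exact hb1.trans hcard

end Transfer

end OBP

theorem order_bijection_preserves_projections_and_rank
    {H : Type*} [NormedAddCommGroup H] [InnerProductSpace ℂ H] [CompleteSpace H]
    (hdim : 2 ≤ Module.rank ℂ H)
    (phi : (H →L[ℂ] H) → (H →L[ℂ] H))
    (hbij : Set.BijOn phi {A : H →L[ℂ] H | 0 ≤ A ∧ A ≤ 1} {A : H →L[ℂ] H | 0 ≤ A ∧ A ≤ 1})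
    (horder : ∀ A ∈ {A : H →L[ℂ] H | 0 ≤ A ∧ A ≤ 1},
      ∀ B ∈ {A : H →L[ℂ] H | 0 ≤ A ∧ A ≤ 1}, (A ≤ B ↔ phi A ≤ phi B)) :
    (∀ A ∈ {A : H →L[ℂ] H | 0 ≤ A ∧ A ≤ 1},
      ((A * A = A ∧ IsSelfAdjoint A) ↔ (phi A * phi A = phi A ∧ IsSelfAdjoint (phi A)))) ∧
    (∀ A ∈ {A : H →L[ℂ] H | 0 ≤ A ∧ A ≤ 1}, A * A = A → IsSelfAdjoint A →
      FiniteDimensional ℂ (LinearMap.range (A : H →ₗ[ℂ] H)) →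
      Module.finrank ℂ (LinearMap.range (phi A : H →ₗ[ℂ] H)) = Module.finrank ℂ (LinearMap.range (A : H →ₗ[ℂ] H))) := by
  classical
  -- a unit vector
  obtain ⟨x, hx⟩ : ∃ x : H, x ≠ 0 := by
    by_contra h
    push_neg at h
    have hsub : Subsingleton H := ⟨fun a b => by rw [h a, h b]⟩
    rw [rank_subsingleton'] at hdim
    norm_num at hdim
  set e : H := (‖x‖ : ℂ)⁻¹ • x with hedef
  have he : ‖e‖ = 1 := by
    rw [hedef, norm_smul]
    simp [norm_ne_zero_iff.mpr hx]
  -- treat the effect set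
  have hbijE : Set.BijOn phi (OBP.ESet (H := H)) (OBP.ESet (H := H)) := hbij
  have horderE : ∀ A ∈ OBP.ESet (H := H), ∀ B ∈ OBP.ESet (H := H),
      (A ≤ B ↔ phi A ≤ phi B) := horder
  -- the inverse map
  set psi : (H →L[ℂ] H) → (H →L[ℂ] H) := Function.invFunOn phi (OBP.ESet (H := H)) with hpsidef
  have hinv : Set.InvOn psi phi (OBP.ESet (H := H)) (OBP.ESet (H := H)) :=
    hbijE.invOn_invFunOn
  have hbijE' : Set.BijOn psi (OBP.ESet (H := H)) (OBP.ESet (H := H)) :=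
    hinv.symm.bijOn hbijE.surjOn.mapsTo_invFunOn hbijE.mapsTo
  have horderE' : ∀ A ∈ OBP.ESet (H := H), ∀ B ∈ OBP.ESet (H := H),
      (A ≤ B ↔ psi A ≤ psi B) := by
    intro A hA B hB
    have hpA : psi A ∈ OBP.ESet (H := H) := hbijE'.mapsTo hA
    have hpB : psi B ∈ OBP.ESet (H := H) := hbijE'.mapsTo hB
    constructor
    · intro h
      rw [← hinv.2 hA, ← hinv.2 hB] at h
      exact (horderE _ hpA _ hpB).mpr h
    · intro h
      have := (horderE _ hpA _ hpB).mp h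
      rwa [hinv.2 hA, hinv.2 hB] at this
  constructor
  · intro A hA
    constructor
    · rintro ⟨hidem, hsa⟩
      exact OBP.proj_forward phi hbijE horderE he hA hidem hsa
    · rintro ⟨hidem', hsa'⟩
      have := OBP.proj_forward psi hbijE' horderE' he (hbijE.mapsTo hA) hidem' hsa'
      rwa [hinv.1 hA] at this
  · intro A hA hidem hsa hfin
    obtain ⟨hfin', hle'⟩ := OBP.rank_forward phi hbijE horderE he hA hidem hsa hfin
    obtain ⟨hidem', hsa'⟩ := OBP.proj_forward phi hbijE horderE he hA hidem hsa
    obtain ⟨hfin'', hle''⟩ :=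
      OBP.rank_forward psi hbijE' horderE' he (hbijE.mapsTo hA) hidem' hsa' hfin'
    rw [hinv.1 hA] at hle''
    exact le_antisymm hle' hle''
end

section
/- Let H be a complex Hilbert space with dim H ≥ 2 and φ : E(H) → E(H) a bijection preserving the order in both directions. Then for every rank-one projection P there exists a strictly increasing bijection f_P : [0,1] → [0,1] such that φ(tP) = f_P(t)·φ(P) for all t ∈ [0,1], and moreover φ⁻¹(t·φ(P)) = f_P⁻¹(t)·P for all t ∈ [0,1]. -/
set_option synthInstance.maxHeartbeats 400000
set_option maxHeartbeats 1000000
set_option linter.unusedSectionVars false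

section Aux

open ContinuousLinearMap

variable {H : Type*} [NormedAddCommGroup H] [InnerProductSpace ℂ H] [CompleteSpace H]

local notation "⟪" x ", " y "⟫" => @inner ℂ _ _ x y

/-- rank-one operator `x ↦ ⟪a,x⟫ • a`. -/
noncomputable def rOp (a : H) : H →L[ℂ] H := (innerSL ℂ a).smulRight a

lemma rOp_apply (a x : H) : rOp a x = ⟪a, x⟫ • a := rfl

lemma rOp_symm (a : H) : ((rOp a : H →L[ℂ] H) : H →ₗ[ℂ] H).IsSymmetric := by
  intro x y
  simp only [ContinuousLinearMap.coe_coe, rOp_apply, inner_smul_left, inner_smul_right,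
    inner_conj_symm]
  ring

lemma rOp_selfAdjoint (a : H) : IsSelfAdjoint (rOp a) :=
  ContinuousLinearMap.isSelfAdjoint_iff_isSymmetric.mpr (rOp_symm a)

lemma sa_inner {A : H →L[ℂ] H} (hA : IsSelfAdjoint A) (x y : H) :
    ⟪A x, y⟫ = ⟪x, A y⟫ := hA.isSymmetric x y

lemma rOp_nonneg (a : H) : 0 ≤ rOp a := by
  rw [ContinuousLinearMap.nonneg_iff_isPositive]
  refine ⟨rOp_symm a, fun x => ?_⟩
  rw [ContinuousLinearMap.reApplyInnerSelf_apply, rOp_apply, inner_smul_left, RCLike.conj_mul,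
    ← RCLike.ofReal_pow, RCLike.ofReal_re]
  positivity

lemma rOp_le_one (a : H) (ha : ‖a‖ ≤ 1) : rOp a ≤ 1 := by
  rw [ContinuousLinearMap.le_def]
  have hsa : IsSelfAdjoint ((1 : H →L[ℂ] H) - rOp a) := (IsSelfAdjoint.one (H →L[ℂ] H)).sub (rOp_selfAdjoint a)
  refine ⟨hsa.isSymmetric, fun x => ?_⟩
  rw [ContinuousLinearMap.reApplyInnerSelf_apply]
  simp only [ContinuousLinearMap.sub_apply, ContinuousLinearMap.one_apply, inner_sub_left,
    rOp_apply, inner_smul_left, map_sub, RCLike.conj_mul, ← RCLike.ofReal_pow, RCLike.ofReal_re]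
  have h1 : RCLike.re ⟪x, x⟫ = ‖x‖ ^ 2 := by
    rw [← inner_self_eq_norm_sq (𝕜 := ℂ)]
  rw [h1]
  have h3 : ‖⟪a, x⟫‖ ≤ ‖x‖ := by
    refine le_trans (norm_inner_le_norm (𝕜 := ℂ) a x) ?_
    calc ‖a‖ * ‖x‖ ≤ 1 * ‖x‖ := by
          exact mul_le_mul_of_nonneg_right ha (norm_nonneg x)
      _ = ‖x‖ := one_mul _
  nlinarith [norm_nonneg (⟪a, x⟫)]

/-- real smul of a nonneg operator by a nonneg scalar is nonneg -/
lemma rsmul_nonneg {A : H →L[ℂ] H} (hA : 0 ≤ A) {t : ℝ} (ht : 0 ≤ t) : 0 ≤ t • A := by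
  have hcast : t • A = ((t:ℂ)) • A := RCLike.real_smul_eq_coe_smul (K := ℂ) t A
  have hsc : IsSelfAdjoint ((t:ℂ)) := by
    rw [IsSelfAdjoint, RCLike.star_def]
    exact Complex.conj_ofReal t
  rw [ContinuousLinearMap.nonneg_iff_isPositive] at hA ⊢
  constructor
  · rw [hcast]
    exact (hsc.smul (ContinuousLinearMap.isSelfAdjoint_iff_isSymmetric.mpr hA.1)).isSymmetric
  · intro x
    rw [ContinuousLinearMap.reApplyInnerSelf_apply, hcast]
    simp only [ContinuousLinearMap.smul_apply, inner_smul_left, RCLike.conj_ofReal,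
      Complex.conj_ofReal, RCLike.re_ofReal_mul, Complex.re_ofReal_mul]
    have := hA.2 x
    rw [ContinuousLinearMap.reApplyInnerSelf_apply] at this
    simp only [RCLike.re_to_complex] at this ⊢
    simp only [Complex.re_ofReal_mul]
    exact mul_nonneg ht this

lemma rsmul_le_rsmul {A : H →L[ℂ] H} (hA : 0 ≤ A) {s t : ℝ} (hst : s ≤ t) : s • A ≤ t • A := by
  have h := rsmul_nonneg hA (sub_nonneg.mpr hst)
  rw [sub_smul] at h
  calc s • A = s • A + 0 := by rw [add_zero]
    _ ≤ s • A + (t • A - s • A) := add_le_add (le_refl _) h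
    _ = t • A := by abel

/-- if `0 ≤ A ≤ c • rOp b` then `A` kills the orthocomplement of `b`. -/
lemma apply_eq_zero_of_le_rOp {A : H →L[ℂ] H} (hA : 0 ≤ A) {c : ℝ} {b : H}
    (h : A ≤ c • rOp b) {z : H} (hz : ⟪b, z⟫ = 0) : A z = 0 := by
  have hre : RCLike.re ⟪A z, z⟫ = 0 := by
    have h1 : 0 ≤ RCLike.re ⟪A z, z⟫ := by
      have := ((ContinuousLinearMap.nonneg_iff_isPositive A).mp hA).2 z
      rwa [ContinuousLinearMap.reApplyInnerSelf_apply] at this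
    have h2 := ((ContinuousLinearMap.le_def A (c • rOp b)).mp h).2 z
    rw [ContinuousLinearMap.reApplyInnerSelf_apply] at h2
    simp only [ContinuousLinearMap.sub_apply, ContinuousLinearMap.smul_apply, rOp_apply, hz,
      zero_smul, smul_zero, zero_sub, inner_neg_left, map_neg] at h2
    linarith
  set S := CFC.sqrt A with hSdef
  have hSnn : (0 : H →L[ℂ] H) ≤ S := CFC.sqrt_nonneg _
  have hSsa : IsSelfAdjoint S := IsSelfAdjoint.of_nonneg hSnn
  have hSS : S * S = A := CFC.sqrt_mul_sqrt_self A hA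
  have hAz : A z = S (S z) := by rw [← hSS]; rfl
  have key : ⟪S z, S z⟫ = ⟪A z, z⟫ := by
    rw [hAz]; exact (hSsa.isSymmetric (S z) z).symm
  have hSz : S z = 0 := by
    have hn : (‖S z‖ : ℝ) ^ 2 = 0 := by
      rw [← inner_self_eq_norm_sq (𝕜 := ℂ), key]; exact hre
    have := pow_eq_zero_iff (M₀ := ℝ) (n := 2) (by norm_num) |>.mp hn
    exact norm_eq_zero.mp this
  rw [hAz, hSz, map_zero]

/-- A selfadjoint operator vanishing on the orthocomplement of `b` has range in the span of `b`. -/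
lemma range_subset_span {A : H →L[ℂ] H} (hA : IsSelfAdjoint A) {b : H}
    (h : ∀ z, ⟪b, z⟫ = 0 → A z = 0) (x : H) : A x ∈ (ℂ ∙ b) := by
  haveI : FiniteDimensional ℂ (ℂ ∙ b) :=
    FiniteDimensional.span_of_finite ℂ (Set.finite_singleton b)
  rw [← Submodule.orthogonal_orthogonal (ℂ ∙ b), Submodule.mem_orthogonal]
  intro u hu
  have hbu : ⟪b, u⟫ = 0 := Submodule.mem_orthogonal_singleton_iff_inner_right.mp hu
  have hAu : A u = 0 := h u hbu
  calc ⟪u, A x⟫ = ⟪A u, x⟫ := (hA.isSymmetric u x).symm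
    _ = 0 := by rw [hAu, inner_zero_left]

/-- A positive operator with range in `span b` is a nonneg multiple of `rOp b`. -/
lemma eq_smul_rOp {A : H →L[ℂ] H} (hA : 0 ≤ A) {b : H}
    (h : ∀ x, A x ∈ (ℂ ∙ b)) : ∃ t : ℝ, 0 ≤ t ∧ A = t • rOp b := by
  have hApos := (ContinuousLinearMap.nonneg_iff_isPositive A).mp hA
  have hAsa : IsSelfAdjoint A := ContinuousLinearMap.isSelfAdjoint_iff_isSymmetric.mpr hApos.1
  by_cases hb : b = 0
  · refine ⟨0, le_refl 0, ?_⟩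
    ext x
    have := h x
    rw [hb, Submodule.span_zero_singleton, Submodule.mem_bot] at this
    simp [this]
  · have hbn : (0:ℝ) < ‖b‖ := norm_pos_iff.mpr hb
    have hbn2 : (0:ℝ) < ‖b‖ ^ 2 := by positivity
    have hform : ∀ x, A x = ((⟪b, A x⟫) / ((‖b‖:ℂ)^2)) • b := by
      intro x
      obtain ⟨c, hc⟩ := Submodule.mem_span_singleton.mp (h x)
      rw [← hc, inner_smul_right, inner_self_eq_norm_sq_to_K]
      congr 1
      have : ((‖b‖:ℂ)^2) ≠ 0 := by
        norm_cast
        positivity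
      push_cast
      field_simp
      exact (mul_div_cancel_right₀ c this).symm
    set μ : ℂ := ⟪b, A b⟫ / ((‖b‖:ℂ)^2) with hμ
    have hAb : A b = μ • b := hform b
    have hreal : (starRingEnd ℂ) ⟪b, A b⟫ = ⟪b, A b⟫ := by
      rw [inner_conj_symm]
      exact hAsa.isSymmetric b b
    have hmu_conj : (starRingEnd ℂ) μ = μ := by
      rw [hμ, map_div₀, hreal]
      norm_num
    have hmu_re : μ = (μ.re : ℂ) := (Complex.conj_eq_iff_re.mp hmu_conj).symm
    have hmu_nonneg : 0 ≤ μ.re := by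
      have h1 : 0 ≤ RCLike.re ⟪A b, b⟫ := by
        have := hApos.2 b
        rwa [ContinuousLinearMap.reApplyInnerSelf_apply] at this
      have hb2c : ((‖b‖:ℂ))^2 ≠ 0 := by
        norm_cast
        positivity
      have h2 : ⟪A b, b⟫ = μ * ((‖b‖:ℂ)^2) := by
        rw [sa_inner hAsa b b, hμ, div_mul_cancel₀ _ hb2c]
      rw [h2, hmu_re] at h1
      have : RCLike.re ((μ.re : ℂ) * ((‖b‖:ℂ)^2)) = μ.re * ‖b‖^2 := by
        norm_cast
      rw [this] at h1
      nlinarith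
    refine ⟨μ.re / ‖b‖^2, div_nonneg hmu_nonneg (le_of_lt hbn2), ?_⟩
    ext x
    have e1 : ⟪b, A x⟫ = μ * ⟪b, x⟫ := by
      rw [← sa_inner hAsa b x, hAb, inner_smul_left, hmu_conj]
    rw [hform x, e1]
    simp only [ContinuousLinearMap.smul_apply, rOp_apply]
    rw [RCLike.real_smul_eq_coe_smul (K := ℂ), smul_smul]
    congr 1
    rw [hmu_re]
    push_cast
    have hb2c : ((‖b‖:ℂ))^2 ≠ 0 := by
      norm_cast
      positivity
    field_simp
    simp only [Complex.ofReal_re]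
    rw [mul_comm (inner ℂ b x)]
    rfl

lemma rOp_ne_zero {v : H} (hv : v ≠ 0) : rOp v ≠ 0 := by
  intro h
  have h1 : rOp v v = 0 := by rw [h]; rfl
  rw [rOp_apply] at h1
  rcases smul_eq_zero.mp h1 with h2 | h2
  · exact inner_self_ne_zero.mpr hv h2
  · exact hv h2

lemma exists_pos_inner {Q : H →L[ℂ] H} (hQ : 0 ≤ Q) (hQne : Q ≠ 0) :
    ∃ x, 0 < RCLike.re ⟪Q x, x⟫ := by
  by_contra h
  push_neg at h
  have hpos := (ContinuousLinearMap.nonneg_iff_isPositive Q).mp hQ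
  have hzero : ∀ x, ⟪Q x, x⟫ = 0 := by
    intro x
    have h1 : RCLike.re ⟪Q x, x⟫ = 0 := le_antisymm (h x) (by
      have := hpos.2 x
      rwa [ContinuousLinearMap.reApplyInnerSelf_apply] at this)
    have h2 : (starRingEnd ℂ) ⟪Q x, x⟫ = ⟪Q x, x⟫ := by
      rw [inner_conj_symm]
      exact (sa_inner (ContinuousLinearMap.isSelfAdjoint_iff_isSymmetric.mpr hpos.1) x x).symm
    have him : (⟪Q x, x⟫ : ℂ).im = 0 := Complex.conj_eq_iff_im.mp h2
    simp only [RCLike.re_to_complex] at h1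
    exact Complex.ext (by simpa using h1) (by simpa using him)
  have hcoe : (Q : H →ₗ[ℂ] H) = 0 := (inner_map_self_eq_zero _).mp fun x => hzero x
  apply hQne
  apply ContinuousLinearMap.coe_injective
  rw [hcoe]
  rfl

lemma re_inner_smul_real (t : ℝ) (A : H →L[ℂ] H) (x : H) :
    RCLike.re ⟪(t • A) x, x⟫ = t * RCLike.re ⟪A x, x⟫ := by
  rw [ContinuousLinearMap.smul_apply, RCLike.real_smul_eq_coe_smul (K := ℂ), inner_smul_left]
  simp only [RCLike.conj_ofReal, Complex.conj_ofReal, RCLike.re_to_complex]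
  exact Complex.re_ofReal_mul t _

lemma smul_le_smul_iff {Q : H →L[ℂ] H} (hQ : 0 ≤ Q) (hQne : Q ≠ 0) {a b : ℝ} :
    a • Q ≤ b • Q ↔ a ≤ b := by
  constructor
  · intro h
    obtain ⟨x, hx⟩ := exists_pos_inner hQ hQne
    have h1 : 0 ≤ b • Q - a • Q := by
      calc (0 : H →L[ℂ] H) = a • Q - a • Q := by rw [sub_self]
        _ ≤ b • Q - a • Q := by exact sub_le_sub_right h _
    rw [← sub_smul] at h1
    have h2 := ((ContinuousLinearMap.nonneg_iff_isPositive _).mp h1).2 x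
    rw [ContinuousLinearMap.reApplyInnerSelf_apply, re_inner_smul_real] at h2
    nlinarith
  · exact rsmul_le_rsmul hQ

lemma smul_inj {Q : H →L[ℂ] H} (hQ : 0 ≤ Q) (hQne : Q ≠ 0) {a b : ℝ}
    (h : a • Q = b • Q) : a = b :=
  le_antisymm ((smul_le_smul_iff hQ hQne).mp (le_of_eq h))
    ((smul_le_smul_iff hQ hQne).mp (le_of_eq h.symm))

/-- elements of the interval `[0, lam • rOp v]` are multiples. -/
lemma mem_interval_eq_smul {v : H} (hv : v ≠ 0) {lam : ℝ} (hlam : 0 < lam)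
    {Q A : H →L[ℂ] H} (hQform : Q = lam • rOp v) (hA0 : 0 ≤ A) (hAQ : A ≤ Q) :
    ∃ s, s ∈ Set.Icc (0:ℝ) 1 ∧ A = s • Q := by
  have h1 : A ≤ lam • rOp v := hQform ▸ hAQ
  have hkill : ∀ z, ⟪v, z⟫ = 0 → A z = 0 := fun z hz => apply_eq_zero_of_le_rOp hA0 h1 hz
  have hAsa : IsSelfAdjoint A := ContinuousLinearMap.isSelfAdjoint_iff_isSymmetric.mpr ((ContinuousLinearMap.nonneg_iff_isPositive A).mp hA0).1
  have hrange := range_subset_span hAsa hkill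
  obtain ⟨t, ht0, hteq⟩ := eq_smul_rOp hA0 hrange
  have hrv0 : (0 : H →L[ℂ] H) ≤ rOp v := rOp_nonneg v
  have hrvne : rOp v ≠ 0 := rOp_ne_zero hv
  have htlam : t ≤ lam := by
    have := hAQ
    rw [hQform, hteq] at this
    exact (smul_le_smul_iff hrv0 hrvne).mp this
  refine ⟨t / lam, ⟨div_nonneg ht0 (le_of_lt hlam), (div_le_one hlam).mpr htlam⟩, ?_⟩
  rw [hQform, hteq, smul_smul, div_mul_cancel₀ _ (ne_of_gt hlam)]

lemma rOp_le_rOp_span {a b : H} (h : rOp a ≤ rOp b) : a ∈ (ℂ ∙ b) := by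
  by_cases ha : a = 0
  · rw [ha]; exact Submodule.zero_mem _
  · have h1 : rOp a ≤ (1:ℝ) • rOp b := by rwa [one_smul]
    have hkill : ∀ z, ⟪b, z⟫ = 0 → rOp a z = 0 :=
      fun z hz => apply_eq_zero_of_le_rOp (rOp_nonneg a) h1 hz
    have hmem := range_subset_span (rOp_selfAdjoint a) hkill a
    rw [rOp_apply] at hmem
    have hne : ⟪a, a⟫ ≠ 0 := inner_self_ne_zero.mpr ha
    have := Submodule.smul_mem (ℂ ∙ b) (⟪a, a⟫)⁻¹ hmem
    rwa [smul_smul, inv_mul_cancel₀ hne, one_smul] at this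

lemma conj_rOp {S : H →L[ℂ] H} (hS : IsSelfAdjoint S) (u : H) :
    S * rOp u * S = rOp (S u) := by
  ext x
  simp only [ContinuousLinearMap.mul_apply, rOp_apply, map_smul]
  rw [sa_inner hS u x]

lemma conj_le_conj {S A B : H →L[ℂ] H} (hS : IsSelfAdjoint S) (h : A ≤ B) :
    S * A * S ≤ S * B * S := by
  rw [ContinuousLinearMap.le_def] at h ⊢
  have := h.conj_adjoint S
  have hadj : ContinuousLinearMap.adjoint S = S := by
    rw [← ContinuousLinearMap.star_eq_adjoint, hS.star_eq]
  rw [hadj] at this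
  have heq : S ∘L (B - A) ∘L S = S * B * S - S * A * S := by
    ext x
    simp [ContinuousLinearMap.mul_apply, map_sub]
  rwa [heq] at this

lemma chain_rank_one {Q : H →L[ℂ] H} (hQ0 : 0 ≤ Q) (hQ1 : Q ≤ 1) (hQne : Q ≠ 0)
    (hchain : ∀ A B : H →L[ℂ] H, 0 ≤ A → A ≤ Q → 0 ≤ B → B ≤ Q → A ≤ B ∨ B ≤ A) :
    ∃ v : H, v ≠ 0 ∧ ∃ lam : ℝ, 0 < lam ∧ Q = lam • rOp v := by
  set S := CFC.sqrt Q with hSdef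
  have hSnn : (0 : H →L[ℂ] H) ≤ S := CFC.sqrt_nonneg _
  have hSsa : IsSelfAdjoint S := IsSelfAdjoint.of_nonneg hSnn
  have hSS : S * S = Q := CFC.sqrt_mul_sqrt_self Q hQ0
  have hSne : S ≠ 0 := by
    intro h
    apply hQne
    rw [← hSS, h, mul_zero]
  have hy0 : ∃ y, S y ≠ 0 := by
    by_contra h
    push_neg at h
    exact hSne (ContinuousLinearMap.ext fun y => by rw [h y]; rfl)
  obtain ⟨y0, hy0⟩ := hy0
  have hy0ne : y0 ≠ 0 := by
    intro h
    rw [h, map_zero] at hy0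
    exact hy0 rfl
  set y1 := ((‖y0‖ : ℂ))⁻¹ • y0 with hy1def
  have hy1norm : ‖y1‖ = 1 := by
    rw [hy1def, norm_smul]
    simp [norm_pos_iff.mpr hy0ne, ne_of_gt (norm_pos_iff.mpr hy0ne)]
  have hSy1 : S y1 ≠ 0 := by
    rw [hy1def, map_smul]
    simp only [ne_eq, smul_eq_zero, inv_eq_zero, Complex.ofReal_eq_zero, norm_eq_zero]
    push_neg
    exact ⟨hy0ne, hy0⟩
  -- rank-one compressions lie below Q
  have hcomp : ∀ u : H, ‖u‖ ≤ 1 → (0 : H →L[ℂ] H) ≤ rOp (S u) ∧ rOp (S u) ≤ Q := by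
    intro u hu
    refine ⟨rOp_nonneg _, ?_⟩
    have h1 : S * rOp u * S ≤ S * 1 * S := conj_le_conj hSsa (rOp_le_one u hu)
    rw [conj_rOp hSsa] at h1
    rwa [mul_one, hSS] at h1
  -- every S x lies in the span of S y1
  have hspan : ∀ x : H, S x ∈ (ℂ ∙ (S y1)) := by
    intro x
    by_cases hx : x = 0
    · rw [hx, map_zero]; exact Submodule.zero_mem _
    · set x1 := ((‖x‖ : ℂ))⁻¹ • x with hx1def
      have hx1norm : ‖x1‖ = 1 := by
        rw [hx1def, norm_smul]
        simp [ne_of_gt (norm_pos_iff.mpr hx)]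
      have hc1 := hcomp x1 (le_of_eq hx1norm)
      have hc2 := hcomp y1 (le_of_eq hy1norm)
      have hSx1 : S x1 ∈ (ℂ ∙ (S y1)) := by
        rcases hchain _ _ hc1.1 hc1.2 hc2.1 hc2.2 with h | h
        · exact rOp_le_rOp_span h
        · have := rOp_le_rOp_span h
          obtain ⟨c, hc⟩ := Submodule.mem_span_singleton.mp this
          have hcne : c ≠ 0 := by
            intro h0
            rw [h0, zero_smul] at hc
            exact hSy1 hc.symm
          rw [Submodule.mem_span_singleton]
          refine ⟨c⁻¹, ?_⟩
          rw [← hc, smul_smul, inv_mul_cancel₀ hcne, one_smul]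
      have hxx : S x = ((‖x‖ : ℂ)) • S x1 := by
        rw [hx1def, map_smul, smul_smul, mul_inv_cancel₀, one_smul]
        simpa using hx
      rw [hxx]
      exact Submodule.smul_mem _ _ hSx1
  set v := S y1 with hvdef
  have hQspan : ∀ x : H, Q x ∈ (ℂ ∙ v) := by
    intro x
    have hQx : Q x = S (S x) := by rw [← hSS]; rfl
    obtain ⟨c, hc⟩ := Submodule.mem_span_singleton.mp (hspan x)
    rw [hQx, ← hc, map_smul]
    exact Submodule.smul_mem _ _ (hspan v)
  obtain ⟨t, ht0, hteq⟩ := eq_smul_rOp hQ0 hQspan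
  have htne : t ≠ 0 := by
    intro h
    rw [h, zero_smul] at hteq
    exact hQne hteq
  exact ⟨v, hSy1, t, lt_of_le_of_ne ht0 (Ne.symm htne), hteq⟩

lemma pos_of_proj {P : H →L[ℂ] H} (hPP : P * P = P) (hsa : IsSelfAdjoint P) : 0 ≤ P := by
  rw [ContinuousLinearMap.nonneg_iff_isPositive]
  refine ⟨hsa.isSymmetric, fun x => ?_⟩
  rw [ContinuousLinearMap.reApplyInnerSelf_apply]
  have h1 : P x = P (P x) := by
    conv_lhs => rw [← hPP]
    rfl
  rw [h1, sa_inner hsa (P x) x, inner_self_eq_norm_sq (𝕜 := ℂ)]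
  positivity

lemma proj_eq_rOp {P : H →L[ℂ] H} (hPP : P * P = P) (hsa : IsSelfAdjoint P)
    (hrk : Module.finrank ℂ (LinearMap.range (P : H →ₗ[ℂ] H)) = 1) :
    ∃ u : H, ‖u‖ = 1 ∧ P = rOp u := by
  have hP0 : 0 ≤ P := pos_of_proj hPP hsa
  obtain ⟨v, hv0, hvspan⟩ := finrank_eq_one_iff'.mp hrk
  set b : H := (v : H) with hbdef
  have hbne : b ≠ 0 := fun h => hv0 (Subtype.ext h)
  have hbnorm : (0:ℝ) < ‖b‖ := norm_pos_iff.mpr hbne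
  set u : H := ((‖b‖ : ℂ))⁻¹ • b with hudef
  have hunorm : ‖u‖ = 1 := by
    rw [hudef, norm_smul]
    simp [ne_of_gt hbnorm]
  have humem : u ∈ LinearMap.range (P : H →ₗ[ℂ] H) := by
    rw [hudef]
    exact Submodule.smul_mem _ _ v.2
  have hPu : P u = u := by
    obtain ⟨y, hy⟩ := humem
    have : P u = P (P y) := by rw [← hy]; rfl
    rw [this, ← ContinuousLinearMap.mul_apply, hPP]; exact hy
  have hrange : ∀ x : H, P x ∈ (ℂ ∙ u) := by
    intro x
    have hx : P x ∈ LinearMap.range (P : H →ₗ[ℂ] H) := LinearMap.mem_range_self _ x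
    obtain ⟨c, hc⟩ := hvspan ⟨P x, hx⟩
    have hc' : c • b = P x := congrArg Subtype.val hc
    rw [Submodule.mem_span_singleton]
    refine ⟨c * (‖b‖ : ℂ), ?_⟩
    rw [← hc', hudef, smul_smul, mul_assoc, mul_inv_cancel₀, mul_one]
    exact_mod_cast ne_of_gt hbnorm
  obtain ⟨t, ht0, hteq⟩ := eq_smul_rOp hP0 hrange
  have happ : (t • rOp u) u = u := by rw [← hteq]; exact hPu
  simp only [ContinuousLinearMap.smul_apply, rOp_apply, inner_self_eq_norm_sq_to_K,
    hunorm] at happ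
  norm_num at happ
  have this : t • u = u := happ
  have ht1 : t = 1 := by
    by_contra hne
    have h0 : (t - 1) • u = 0 := by
      rw [sub_smul, this, one_smul, sub_self]
    have hu0 : u ≠ 0 := by
      intro h
      rw [h, norm_zero] at hunorm
      norm_num at hunorm
    rcases smul_eq_zero.mp h0 with h | h
    · exact hne (by linarith [sub_eq_zero.mp h])
    · exact hu0 h
  exact ⟨u, hunorm, by rw [hteq, ht1, one_smul]⟩

end Aux

theorem order_bijection_scalar_action_on_weak_atoms
    {H : Type*} [NormedAddCommGroup H] [InnerProductSpace ℂ H] [CompleteSpace H]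
    (hdim : 2 ≤ Module.rank ℂ H)
    (phi psi : (H →L[ℂ] H) → (H →L[ℂ] H))
    (hbij : Set.BijOn phi {A : H →L[ℂ] H | 0 ≤ A ∧ A ≤ 1} {A : H →L[ℂ] H | 0 ≤ A ∧ A ≤ 1})
    (hinv : ∀ A ∈ {A : H →L[ℂ] H | 0 ≤ A ∧ A ≤ 1}, psi (phi A) = A ∧ phi (psi A) = A)
    (hpsi_maps : Set.MapsTo psi {A : H →L[ℂ] H | 0 ≤ A ∧ A ≤ 1}
      {A : H →L[ℂ] H | 0 ≤ A ∧ A ≤ 1})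
    (horder : ∀ A ∈ {A : H →L[ℂ] H | 0 ≤ A ∧ A ≤ 1},
      ∀ B ∈ {A : H →L[ℂ] H | 0 ≤ A ∧ A ≤ 1}, (A ≤ B ↔ phi A ≤ phi B)) :
    ∀ P : H →L[ℂ] H, P * P = P → IsSelfAdjoint P →
      Module.finrank ℂ (LinearMap.range (P : H →ₗ[ℂ] H)) = 1 →
      ∃ f : ℝ → ℝ, StrictMonoOn f (Set.Icc (0:ℝ) 1) ∧
        Set.BijOn f (Set.Icc (0:ℝ) 1) (Set.Icc (0:ℝ) 1) ∧
        (∀ t ∈ Set.Icc (0:ℝ) 1, phi (t • P) = f t • phi P) ∧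
        (∀ t ∈ Set.Icc (0:ℝ) 1, ∀ s ∈ Set.Icc (0:ℝ) 1, f s = t →
          psi (t • phi P) = s • P) := by
  classical
  intro P hPP hPsa hPrk
  obtain ⟨u, hu1, hPu⟩ := proj_eq_rOp hPP hPsa hPrk
  have hune : u ≠ 0 := by
    intro h
    rw [h, norm_zero] at hu1
    norm_num at hu1
  have hP0 : 0 ≤ P := by rw [hPu]; exact rOp_nonneg u
  have hP1 : P ≤ 1 := by rw [hPu]; exact rOp_le_one u (le_of_eq hu1)
  have hPne : P ≠ 0 := by rw [hPu]; exact rOp_ne_zero hune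
  have hPmem : P ∈ {A : H →L[ℂ] H | 0 ≤ A ∧ A ≤ 1} := ⟨hP0, hP1⟩
  have hone : (0 : H →L[ℂ] H) ≤ 1 :=
    (ContinuousLinearMap.nonneg_iff_isPositive 1).mpr ContinuousLinearMap.isPositive_one
  have h0mem : (0 : H →L[ℂ] H) ∈ {A : H →L[ℂ] H | 0 ≤ A ∧ A ≤ 1} := ⟨le_refl 0, hone⟩
  have hphi0 : phi 0 = 0 := by
    obtain ⟨B, hBmem, hB⟩ := hbij.2.2 h0mem
    refine le_antisymm ?_ (hbij.1 h0mem).1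
    calc phi 0 ≤ phi B := (horder 0 h0mem B hBmem).mp hBmem.1
      _ = 0 := hB
  have hQmem : phi P ∈ {A : H →L[ℂ] H | 0 ≤ A ∧ A ≤ 1} := hbij.1 hPmem
  have hQne : phi P ≠ 0 := by
    intro h
    apply hPne
    have h1 : psi (phi P) = P := (hinv P hPmem).1
    have h2 : psi (phi 0) = 0 := (hinv 0 h0mem).1
    rw [hphi0] at h2
    rw [← h1, h, h2]
  have hPform : P = (1:ℝ) • rOp u := by rw [one_smul]; exact hPu
  have hbelowP : ∀ A : H →L[ℂ] H, 0 ≤ A → A ≤ P →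
      ∃ s, s ∈ Set.Icc (0:ℝ) 1 ∧ A = s • P :=
    fun A hA0 hAP => mem_interval_eq_smul hune one_pos hPform hA0 hAP
  have hchainQ : ∀ A B : H →L[ℂ] H, 0 ≤ A → A ≤ phi P → 0 ≤ B → B ≤ phi P →
      A ≤ B ∨ B ≤ A := by
    intro A B hA0 hAQ hB0 hBQ
    have hAmem : A ∈ {A : H →L[ℂ] H | 0 ≤ A ∧ A ≤ 1} := ⟨hA0, le_trans hAQ hQmem.2⟩
    have hBmem : B ∈ {A : H →L[ℂ] H | 0 ≤ A ∧ A ≤ 1} := ⟨hB0, le_trans hBQ hQmem.2⟩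
    have hA'mem := hpsi_maps hAmem
    have hB'mem := hpsi_maps hBmem
    have hphiA : phi (psi A) = A := (hinv A hAmem).2
    have hphiB : phi (psi B) = B := (hinv B hBmem).2
    have hA'P : psi A ≤ P := (horder _ hA'mem P hPmem).mpr (by rw [hphiA]; exact hAQ)
    have hB'P : psi B ≤ P := (horder _ hB'mem P hPmem).mpr (by rw [hphiB]; exact hBQ)
    obtain ⟨s, hs, hAs⟩ := hbelowP (psi A) hA'mem.1 hA'P
    obtain ⟨t, ht, hBt⟩ := hbelowP (psi B) hB'mem.1 hB'P
    rcases le_total s t with h | h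
    · left
      rw [← hphiA, ← hphiB]
      exact (horder _ hA'mem _ hB'mem).mp (by rw [hAs, hBt]; exact rsmul_le_rsmul hP0 h)
    · right
      rw [← hphiA, ← hphiB]
      exact (horder _ hB'mem _ hA'mem).mp (by rw [hAs, hBt]; exact rsmul_le_rsmul hP0 h)
  obtain ⟨v, hv, lam, hlam, hQform⟩ := chain_rank_one hQmem.1 hQmem.2 hQne hchainQ
  have hmem : ∀ t ∈ Set.Icc (0:ℝ) 1, t • P ∈ {A : H →L[ℂ] H | 0 ≤ A ∧ A ≤ 1} ∧ t • P ≤ P := by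
    intro t ht
    have htP0 : 0 ≤ t • P := rsmul_nonneg hP0 ht.1
    have htPP : t • P ≤ P := by
      calc t • P ≤ 1 • P := rsmul_le_rsmul hP0 ht.2
        _ = P := one_smul _ _
    exact ⟨⟨htP0, le_trans htPP hP1⟩, htPP⟩
  have hexists : ∀ t ∈ Set.Icc (0:ℝ) 1,
      ∃ s, s ∈ Set.Icc (0:ℝ) 1 ∧ phi (t • P) = s • phi P := by
    intro t ht
    obtain ⟨htPmem, htPP⟩ := hmem t ht
    have h1 : phi (t • P) ≤ phi P := (horder _ htPmem P hPmem).mp htPP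
    have h0 : 0 ≤ phi (t • P) := by
      rw [← hphi0]
      exact (horder 0 h0mem _ htPmem).mp htPmem.1
    exact mem_interval_eq_smul hv hlam hQform h0 h1
  set f : ℝ → ℝ := fun t =>
    if h : t ∈ Set.Icc (0:ℝ) 1 then (hexists t h).choose else t with hf
  have hfspec : ∀ t (ht : t ∈ Set.Icc (0:ℝ) 1),
      f t ∈ Set.Icc (0:ℝ) 1 ∧ phi (t • P) = f t • phi P := by
    intro t ht
    have hft : f t = (hexists t ht).choose := by rw [hf]; exact dif_pos ht
    rw [hft]
    exact (hexists t ht).choose_spec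
  have hsmul_inj' : ∀ a b : ℝ, a • phi P = b • phi P → a = b :=
    fun a b h => smul_inj hQmem.1 hQne h
  have hphiinj : ∀ A ∈ {A : H →L[ℂ] H | 0 ≤ A ∧ A ≤ 1},
      ∀ B ∈ {A : H →L[ℂ] H | 0 ≤ A ∧ A ≤ 1}, phi A = phi B → A = B := by
    intro A hA B hB h
    rw [← (hinv A hA).1, ← (hinv B hB).1, h]
  have hPsmulinj : ∀ a b : ℝ, a • P = b • P → a = b :=
    fun a b h => smul_inj hP0 hPne h
  have hmono : StrictMonoOn f (Set.Icc (0:ℝ) 1) := by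
    intro a ha b hb hab
    obtain ⟨hfa, hEa⟩ := hfspec a ha
    obtain ⟨hfb, hEb⟩ := hfspec b hb
    have h1 : a • P ≤ b • P := rsmul_le_rsmul hP0 (le_of_lt hab)
    have h2 : phi (a • P) ≤ phi (b • P) :=
      (horder _ (hmem a ha).1 _ (hmem b hb).1).mp h1
    rw [hEa, hEb] at h2
    have hle : f a ≤ f b := (smul_le_smul_iff hQmem.1 hQne).mp h2
    refine lt_of_le_of_ne hle ?_
    intro h
    have h3 : phi (a • P) = phi (b • P) := by rw [hEa, hEb, h]
    have h4 := hphiinj _ (hmem a ha).1 _ (hmem b hb).1 h3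
    exact (ne_of_lt hab) (hPsmulinj a b h4)
  have hsurj : ∀ s ∈ Set.Icc (0:ℝ) 1, ∃ t ∈ Set.Icc (0:ℝ) 1, f t = s := by
    intro s hs
    have hsQ0 : 0 ≤ s • phi P := rsmul_nonneg hQmem.1 hs.1
    have hsQQ : s • phi P ≤ phi P := by
      calc s • phi P ≤ 1 • phi P := rsmul_le_rsmul hQmem.1 hs.2
        _ = phi P := one_smul _ _
    have hsQmem : s • phi P ∈ {A : H →L[ℂ] H | 0 ≤ A ∧ A ≤ 1} := ⟨hsQ0, le_trans hsQQ hQmem.2⟩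
    have hBmem := hpsi_maps hsQmem
    have hphiB : phi (psi (s • phi P)) = s • phi P := (hinv _ hsQmem).2
    have hBP : psi (s • phi P) ≤ P :=
      (horder _ hBmem P hPmem).mpr (by rw [hphiB]; exact hsQQ)
    obtain ⟨t, ht, hBt⟩ := hbelowP _ hBmem.1 hBP
    refine ⟨t, ht, ?_⟩
    have h5 := (hfspec t ht).2
    rw [← hBt, hphiB] at h5
    exact (hsmul_inj' _ _ h5).symm
  refine ⟨f, hmono, ⟨fun t ht => (hfspec t ht).1, hmono.injOn, fun s hs => ?_⟩,
    fun t ht => (hfspec t ht).2, ?_⟩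
  · obtain ⟨t, ht, hft⟩ := hsurj s hs
    exact ⟨t, ht, hft⟩
  · intro t ht s hs hfs
    have h1 := (hfspec s hs).2
    rw [hfs] at h1
    rw [← h1]
    exact (hinv _ (hmem s hs).1).1
end
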